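/- arXiv:0903.0561 — 12 statements merged into one kernel-verified Lean document; each statement's English description precedes it below -/
import Mathlib

section
/- Let α > 0 and C ≥ 0. Let f : [0,∞) → [0,∞) be measurable with f(λ) ≤ C·λ^α for all λ ≥ 0, and let g : [0,∞) → [0,∞) be a function such that for every t > 0 and every λ ≥ 0 one has g(λ) ≤ t·e^t·∫_0^∞ f(μ·λ)·e^{-μ·t} dμ. Then for all λ ≥ 0 one has g(λ) ≤ C·(e/α)^α·Γ(α+1)·λ^α. -/
open MeasureTheory

/-- If `f(λ) ≤ C λ^α` on `[0,∞)` and `g(λ) ≤ t e^t ∫_0^∞ f(μλ) e^{-μt} dμ`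
for all `t > 0`, then `g(λ) ≤ C (e/α)^α Γ(α+1) λ^α`. -/
theorem stmt_0 (α C : ℝ) (hα : 0 < α) (hC : 0 ≤ C)
    (f g : ℝ → ℝ) (hf_meas : Measurable f)
    (hf_nonneg : ∀ x : ℝ, 0 ≤ x → 0 ≤ f x)
    (hg_nonneg : ∀ x : ℝ, 0 ≤ x → 0 ≤ g x)
    (hf : ∀ lam : ℝ, 0 ≤ lam → f lam ≤ C * lam ^ α)
    (hg : ∀ t : ℝ, 0 < t → ∀ lam : ℝ, 0 ≤ lam →
      g lam ≤ t * Real.exp t * ∫ μ in Set.Ioi (0:ℝ), f (μ * lam) * Real.exp (-μ * t)) :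
    ∀ lam : ℝ, 0 ≤ lam →
      g lam ≤ C * (Real.exp 1 / α) ^ α * Real.Gamma (α + 1) * lam ^ α := by
  intro lam hlam
  have h := hg α hα lam hlam
  -- dominating function
  have hint0 : IntegrableOn (fun μ : ℝ => μ ^ α * Real.exp (-(α * μ))) (Set.Ioi 0) := by
    have := integrableOn_rpow_mul_exp_neg_mul_rpow (s := α) (p := 1) (b := α)
      (by linarith) zero_lt_one hα
    refine this.congr_fun (fun x hx => ?_) measurableSet_Ioi
    beta_reduce
    rw [Real.rpow_one, neg_mul]
  have hint : IntegrableOn (fun μ : ℝ => C * lam ^ α * (μ ^ α * Real.exp (-(α * μ))))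
      (Set.Ioi 0) := hint0.const_mul _
  have hle : (∫ μ in Set.Ioi (0:ℝ), f (μ * lam) * Real.exp (-μ * α))
      ≤ ∫ μ in Set.Ioi (0:ℝ), C * lam ^ α * (μ ^ α * Real.exp (-(α * μ))) := by
    refine integral_mono_of_nonneg ?_ hint ?_
    · refine (ae_restrict_iff' measurableSet_Ioi).2 (Filter.Eventually.of_forall fun μ hμ => ?_)
      have hμ0 : (0:ℝ) < μ := hμ
      exact mul_nonneg (hf_nonneg _ (mul_nonneg hμ0.le hlam)) (Real.exp_pos _).le
    · refine (ae_restrict_iff' measurableSet_Ioi).2 (Filter.Eventually.of_forall fun μ hμ => ?_)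
      have hμ0 : (0:ℝ) < μ := hμ
      have h1 : f (μ * lam) ≤ C * (μ * lam) ^ α := hf _ (mul_nonneg hμ0.le hlam)
      have h2 : (μ * lam) ^ α = μ ^ α * lam ^ α := Real.mul_rpow hμ0.le hlam
      have h3 : f (μ * lam) * Real.exp (-μ * α) ≤ C * (μ * lam) ^ α * Real.exp (-μ * α) :=
        mul_le_mul_of_nonneg_right h1 (Real.exp_pos _).le
      calc f (μ * lam) * Real.exp (-μ * α) ≤ C * (μ * lam) ^ α * Real.exp (-μ * α) := h3
        _ = C * lam ^ α * (μ ^ α * Real.exp (-(α * μ))) := by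
            rw [h2]; ring_nf
  have hval : (∫ μ in Set.Ioi (0:ℝ), μ ^ α * Real.exp (-(α * μ)))
      = (1 / α) ^ (α + 1) * Real.Gamma (α + 1) := by
    have := Real.integral_rpow_mul_exp_neg_mul_Ioi (a := α + 1) (r := α)
      (by linarith) hα
    simpa using this
  have hval' : (∫ μ in Set.Ioi (0:ℝ), C * lam ^ α * (μ ^ α * Real.exp (-(α * μ))))
      = C * lam ^ α * ((1 / α) ^ (α + 1) * Real.Gamma (α + 1)) := by
    rw [integral_const_mul, hval]
  have key : α * Real.exp α * ((1 / α) ^ (α + 1)) = (Real.exp 1 / α) ^ α := by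
    rw [Real.rpow_add (by positivity), Real.rpow_one, Real.div_rpow (Real.exp_pos 1).le hα.le,
      Real.div_rpow zero_le_one hα.le, Real.one_rpow, ← Real.exp_one_rpow α]
    field_simp
  calc g lam ≤ α * Real.exp α * ∫ μ in Set.Ioi (0:ℝ), f (μ * lam) * Real.exp (-μ * α) := h
    _ ≤ α * Real.exp α * ∫ μ in Set.Ioi (0:ℝ), C * lam ^ α * (μ ^ α * Real.exp (-(α * μ))) := by
        exact mul_le_mul_of_nonneg_left hle (by positivity)
    _ = C * (Real.exp 1 / α) ^ α * Real.Gamma (α + 1) * lam ^ α := by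
        rw [hval', ← key]; ring
end

section
/- Let φ : [0,∞) → [0,∞) be nondecreasing and measurable, and assume its Laplace transform φ̂(s) := ∫_0^∞ e^{-s·μ}·φ(μ) dμ is finite for every s > 0. Let g : (0,∞) → [0,∞) satisfy, for every t > 0 and λ > 0, g(λ) ≤ t·e^t·∫_0^∞ φ(μ·λ)·e^{-μ·t} dμ. Then for every t > 0 and λ > 0 one has g(λ) ≤ (t·e^t/λ)·φ̂(t/λ). Moreover, if there is a constant C_φ ≥ 0 such that φ̂(s) ≤ C_φ·s^{-1}·φ(s^{-1}) for all s > 0, then g(λ) ≤ e·C_φ·φ(λ) for all λ > 0. -/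
open MeasureTheory

/-- If `φ` is nondecreasing with finite Laplace transform
`φ̂(s) = ∫_0^∞ e^{-sμ} φ μ dμ`, and `g(λ) ≤ t e^t ∫_0^∞ φ(μλ) e^{-μt} dμ` for all `t, λ > 0`,
then `g(λ) ≤ (t e^t / λ) φ̂(t/λ)`; and if moreover `φ̂(s) ≤ C_φ s⁻¹ φ(s⁻¹)` for all `s > 0`,
then `g(λ) ≤ e C_φ φ(λ)`. -/
theorem stmt_1 (φ g : ℝ → ℝ)
    (hφ_nonneg : ∀ x : ℝ, 0 ≤ x → 0 ≤ φ x)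
    (hφ_mono : MonotoneOn φ (Set.Ici 0))
    (hφ_meas : Measurable φ)
    (hφ_int : ∀ s : ℝ, 0 < s →
      IntegrableOn (fun μ => Real.exp (-s * μ) * φ μ) (Set.Ioi (0:ℝ)))
    (hg_nonneg : ∀ lam : ℝ, 0 < lam → 0 ≤ g lam)
    (hg : ∀ t : ℝ, 0 < t → ∀ lam : ℝ, 0 < lam →
      g lam ≤ t * Real.exp t * ∫ μ in Set.Ioi (0:ℝ), φ (μ * lam) * Real.exp (-μ * t)) :
    (∀ t : ℝ, 0 < t → ∀ lam : ℝ, 0 < lam →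
      g lam ≤ (t * Real.exp t / lam) *
        ∫ μ in Set.Ioi (0:ℝ), Real.exp (-(t / lam) * μ) * φ μ) ∧
    (∀ Cφ : ℝ, 0 ≤ Cφ →
      (∀ s : ℝ, 0 < s →
        (∫ μ in Set.Ioi (0:ℝ), Real.exp (-s * μ) * φ μ) ≤ Cφ * s⁻¹ * φ s⁻¹) →
      ∀ lam : ℝ, 0 < lam → g lam ≤ Real.exp 1 * Cφ * φ lam) := by
  have key : ∀ t : ℝ, 0 < t → ∀ lam : ℝ, 0 < lam →
      g lam ≤ (t * Real.exp t / lam) *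
        ∫ μ in Set.Ioi (0:ℝ), Real.exp (-(t / lam) * μ) * φ μ := by
    intro t ht lam hlam
    have h1 := hg t ht lam hlam
    have hcv : (∫ μ in Set.Ioi (0:ℝ), φ (μ * lam) * Real.exp (-μ * t))
        = lam⁻¹ * ∫ μ in Set.Ioi (0:ℝ), Real.exp (-(t / lam) * μ) * φ μ := by
      have := MeasureTheory.integral_comp_mul_right_Ioi
        (fun x => Real.exp (-(t / lam) * x) * φ x) 0 hlam
      simp only [zero_mul, smul_eq_mul] at this
      rw [← this]
      apply setIntegral_congr_fun measurableSet_Ioi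
      intro μ hμ
      have : -(t / lam) * (μ * lam) = -μ * t := by field_simp
      dsimp only; rw [this]; ring
    rw [hcv] at h1
    calc g lam ≤ t * Real.exp t * (lam⁻¹ * ∫ μ in Set.Ioi (0:ℝ),
          Real.exp (-(t / lam) * μ) * φ μ) := h1
      _ = (t * Real.exp t / lam) * ∫ μ in Set.Ioi (0:ℝ),
          Real.exp (-(t / lam) * μ) * φ μ := by ring
  refine ⟨key, ?_⟩
  intro Cφ hCφ hhat lam hlam
  have h1 := key 1 one_pos lam hlam
  have h2 := hhat (1 / lam) (by positivity)
  have hinv : (1 / lam)⁻¹ = lam := by field_simp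
  rw [hinv] at h2
  calc g lam ≤ (1 * Real.exp 1 / lam) *
        ∫ μ in Set.Ioi (0:ℝ), Real.exp (-(1 / lam) * μ) * φ μ := h1
    _ ≤ (1 * Real.exp 1 / lam) * (Cφ * (1 / lam)⁻¹ * φ lam) := by
        apply mul_le_mul_of_nonneg_left _ (by positivity)
        simpa [hinv] using h2
    _ = Real.exp 1 * Cφ * φ lam := by
        rw [hinv]; field_simp
end

section
/- Let ι be a countable index set, let E, F : ι → ℝ be families of nonnegative real numbers, and let γ, α, C be real numbers with 0 < γ ≤ α and C > 0. Assume: (i) for every t > 0, ∑'_{j∈ι} exp(-t·F_j) ≤ ∑'_{j∈ι} exp(-t·E_j) (sums taken in [0,∞]); and (ii) for every λ ≥ 0, ∑'_{j∈ι} ((λ - E_j)_+)^γ ≤ C·λ^α. Then for every λ > 0, ∑'_{j∈ι} ((λ - F_j)_+)^γ ≤ C·(γ/e)^γ·(e/α)^α·(Γ(α+1)/Γ(γ+1))·λ^α. -/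
open Real MeasureTheory Set ENNReal

lemma aux1 {γ : ℝ} (hγ : 0 < γ) {v : ℝ} (hv : 0 ≤ v) :
    v ^ γ ≤ (γ / Real.exp 1) ^ γ * Real.exp v := by
  rcases hv.eq_or_lt with rfl | hv
  · rw [Real.zero_rpow hγ.ne']; positivity
  · have h1 : Real.log (v / γ) ≤ v / γ - 1 := Real.log_le_sub_one_of_pos (by positivity)
    rw [Real.log_div hv.ne' hγ.ne'] at h1
    have h2 : Real.log v * γ ≤ Real.log (γ / Real.exp 1) * γ + v := by
      rw [Real.log_div hγ.ne' (Real.exp_pos 1).ne', Real.log_exp]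
      nlinarith [mul_le_mul_of_nonneg_right h1 hγ.le, div_mul_cancel₀ v hγ.ne']
    calc v ^ γ = Real.exp (Real.log v * γ) := Real.rpow_def_of_pos hv γ
      _ ≤ Real.exp (Real.log (γ / Real.exp 1) * γ + v) := Real.exp_le_exp.2 h2
      _ = (γ / Real.exp 1) ^ γ * Real.exp v := by
          rw [Real.exp_add, Real.rpow_def_of_pos (by positivity)]

lemma aux_vanish {h : ℝ → ℝ≥0∞} (h0 : ∀ μ : ℝ, μ ≤ 0 → h μ = 0) :
    ∫⁻ μ : ℝ, h μ = ∫⁻ μ in Ioi (0:ℝ), h μ := by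
  rw [← lintegral_indicator measurableSet_Ioi]
  congr 1; funext μ
  by_cases hμ : μ ∈ Ioi (0:ℝ)
  · rw [indicator_of_mem hμ]
  · rw [indicator_of_notMem hμ, h0 μ (by simpa using hμ)]

lemma aux_base {γ t : ℝ} (hγ : 0 < γ) (ht : 0 < t) :
    ∫⁻ μ : ℝ, ENNReal.ofReal ((max μ 0) ^ γ * Real.exp (-(t * μ))) =
      ENNReal.ofReal ((1 / t) ^ (γ + 1) * Real.Gamma (γ + 1)) := by
  rw [aux_vanish (fun μ hμ => by
    rw [max_eq_right hμ, Real.zero_rpow hγ.ne', zero_mul, ENNReal.ofReal_zero])]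
  rw [setLIntegral_congr_fun measurableSet_Ioi
    (fun μ (hμ : μ ∈ Ioi (0:ℝ)) => by
      rw [max_eq_left (le_of_lt hμ)])]
  rw [← MeasureTheory.ofReal_integral_eq_lintegral_ofReal]
  · congr 1
    have := Real.integral_rpow_mul_exp_neg_mul_Ioi (a := γ + 1) (r := t) (by linarith) ht
    simpa using this
  · have := integrableOn_rpow_mul_exp_neg_mul_rpow (s := γ) (p := 1) (b := t)
      (by linarith) zero_lt_one ht
    simpa [Real.rpow_one, IntegrableOn] using this
  · filter_upwards [ae_restrict_mem measurableSet_Ioi] with μ hμ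
    exact mul_nonneg (Real.rpow_nonneg (le_of_lt hμ) _) (Real.exp_pos _).le

lemma aux_shift {γ t b : ℝ} (hγ : 0 < γ) (ht : 0 < t) (hb : 0 ≤ b) :
    ∫⁻ μ in Ioi (0:ℝ), ENNReal.ofReal ((max (μ - b) 0) ^ γ * Real.exp (-(t * μ))) =
      ENNReal.ofReal (Real.exp (-(t * b))) *
        ENNReal.ofReal ((1 / t) ^ (γ + 1) * Real.Gamma (γ + 1)) := by
  rw [← aux_vanish (fun μ hμ => by
    rw [max_eq_right (by linarith), Real.zero_rpow hγ.ne', zero_mul, ENNReal.ofReal_zero])]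
  have hpt : ∀ μ : ℝ, ENNReal.ofReal ((max (μ - b) 0) ^ γ * Real.exp (-(t * μ))) =
      ENNReal.ofReal (Real.exp (-(t * b))) *
        ENNReal.ofReal ((max (μ - b) 0) ^ γ * Real.exp (-(t * (μ - b)))) := by
    intro μ
    rw [← ENNReal.ofReal_mul (Real.exp_pos _).le]
    congr 1
    have e1 : Real.exp (-(t * b)) * Real.exp (-(t * (μ - b))) = Real.exp (-(t * μ)) := by
      rw [← Real.exp_add]; congr 1; ring
    rw [← e1]; ring
  simp_rw [hpt]
  rw [lintegral_const_mul' _ _ ENNReal.ofReal_ne_top]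
  congr 1
  calc ∫⁻ μ : ℝ, ENNReal.ofReal ((max (μ - b) 0) ^ γ * Real.exp (-(t * (μ - b))))
      = ∫⁻ μ : ℝ, ENNReal.ofReal ((max μ 0) ^ γ * Real.exp (-(t * μ))) :=
        lintegral_sub_right_eq_self
          (fun μ : ℝ => ENNReal.ofReal ((max μ 0) ^ γ * Real.exp (-(t * μ)))) b
    _ = ENNReal.ofReal ((1 / t) ^ (γ + 1) * Real.Gamma (γ + 1)) := aux_base hγ ht

/-- semigroup domination plus a Riesz-mean bound for `E` yields a Riesz-mean
bound for `F` with excess factor `(γ/e)^γ (e/α)^α Γ(α+1)/Γ(γ+1)`. -/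
theorem stmt_2 {ι : Type*} [Countable ι] (E F : ι → ℝ) (γ α C : ℝ)
    (hE : ∀ j, 0 ≤ E j) (hF : ∀ j, 0 ≤ F j)
    (hγ : 0 < γ) (hγα : γ ≤ α) (hC : 0 < C)
    (hdom : ∀ t : ℝ, 0 < t →
      ∑' j, ENNReal.ofReal (Real.exp (-t * F j)) ≤
        ∑' j, ENNReal.ofReal (Real.exp (-t * E j)))
    (hH : ∀ lam : ℝ, 0 ≤ lam →
      ∑' j, ENNReal.ofReal ((max (lam - E j) 0) ^ γ) ≤ ENNReal.ofReal (C * lam ^ α)) :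
    ∀ lam : ℝ, 0 < lam →
      ∑' j, ENNReal.ofReal ((max (lam - F j) 0) ^ γ) ≤
        ENNReal.ofReal (C * (γ / Real.exp 1) ^ γ * (Real.exp 1 / α) ^ α *
          (Real.Gamma (α + 1) / Real.Gamma (γ + 1)) * lam ^ α) := by
  intro lam hlam
  have hα : 0 < α := lt_of_lt_of_le hγ hγα
  set t : ℝ := α / lam with htdef
  have ht : 0 < t := div_pos hα hlam
  have htl : t * lam = α := div_mul_cancel₀ α hlam.ne'
  set K : ℝ := (γ / Real.exp 1) ^ γ * t ^ (-γ) * Real.exp (t * lam) with hK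
  have hK0 : 0 ≤ K := by positivity
  set D : ℝ := (1 / t) ^ (γ + 1) * Real.Gamma (γ + 1) with hD
  have hG1 : 0 < Real.Gamma (γ + 1) := Real.Gamma_pos_of_pos (by linarith)
  have hG2 : 0 < Real.Gamma (α + 1) := Real.Gamma_pos_of_pos (by linarith)
  have hDpos : 0 < D := by positivity
  have step1 : ∀ j, ENNReal.ofReal ((max (lam - F j) 0) ^ γ) ≤
      ENNReal.ofReal K * ENNReal.ofReal (Real.exp (-t * F j)) := by
    intro j
    rcases le_or_gt lam (F j) with h | h
    · rw [max_eq_right (by linarith), Real.zero_rpow hγ.ne', ENNReal.ofReal_zero]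
      exact zero_le
    · rw [max_eq_left (by linarith), ← ENNReal.ofReal_mul hK0]
      apply ENNReal.ofReal_le_ofReal
      have hu : (0:ℝ) ≤ lam - F j := by linarith
      have h2 := aux1 hγ (v := t * (lam - F j)) (by positivity)
      rw [Real.mul_rpow ht.le hu] at h2
      have e1 : Real.exp (t * (lam - F j)) = Real.exp (t * lam) * Real.exp (-t * F j) := by
        rw [← Real.exp_add]; congr 1; ring
      rw [e1] at h2
      have htγ : (0:ℝ) < t ^ γ := Real.rpow_pos_of_pos ht γ
      rw [hK, Real.rpow_neg ht.le]
      calc (lam - F j) ^ γ = t ^ γ * (lam - F j) ^ γ / t ^ γ := by field_simp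
        _ ≤ (γ / Real.exp 1) ^ γ * (Real.exp (t * lam) * Real.exp (-t * F j)) / t ^ γ := by
            gcongr
        _ = (γ / Real.exp 1) ^ γ * (t ^ γ)⁻¹ * Real.exp (t * lam) * Real.exp (-t * F j) := by
            field_simp
  have meas : ∀ j, AEMeasurable
      (fun μ : ℝ => ENNReal.ofReal ((max (μ - E j) 0) ^ γ * Real.exp (-(t * μ))))
      (volume.restrict (Ioi (0:ℝ))) := by
    intro j
    apply Measurable.aemeasurable
    fun_prop
  have hDS : ENNReal.ofReal D * ∑' j, ENNReal.ofReal (Real.exp (-t * E j)) ≤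
      ENNReal.ofReal (C * ((1 / t) ^ (α + 1) * Real.Gamma (α + 1))) := by
    calc ENNReal.ofReal D * ∑' j, ENNReal.ofReal (Real.exp (-t * E j))
        = ∑' j, ENNReal.ofReal D * ENNReal.ofReal (Real.exp (-t * E j)) :=
          ENNReal.tsum_mul_left.symm
      _ = ∑' j, ∫⁻ μ in Ioi (0:ℝ),
            ENNReal.ofReal ((max (μ - E j) 0) ^ γ * Real.exp (-(t * μ))) := by
          refine tsum_congr fun j => ?_
          rw [aux_shift hγ ht (hE j), mul_comm, neg_mul]
      _ = ∫⁻ μ in Ioi (0:ℝ), ∑' j,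
            ENNReal.ofReal ((max (μ - E j) 0) ^ γ * Real.exp (-(t * μ))) :=
          (lintegral_tsum meas).symm
      _ ≤ ∫⁻ μ in Ioi (0:ℝ),
            ENNReal.ofReal (C * μ ^ α) * ENNReal.ofReal (Real.exp (-(t * μ))) := by
          refine lintegral_mono_ae ?_
          filter_upwards [ae_restrict_mem measurableSet_Ioi] with μ hμ
          calc ∑' j, ENNReal.ofReal ((max (μ - E j) 0) ^ γ * Real.exp (-(t * μ)))
              = (∑' j, ENNReal.ofReal ((max (μ - E j) 0) ^ γ)) *
                  ENNReal.ofReal (Real.exp (-(t * μ))) := by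
                rw [← ENNReal.tsum_mul_right]
                exact tsum_congr fun j =>
                  ENNReal.ofReal_mul (Real.rpow_nonneg (le_max_right _ _) _)
            _ ≤ ENNReal.ofReal (C * μ ^ α) * ENNReal.ofReal (Real.exp (-(t * μ))) :=
                _root_.mul_le_mul_left (hH μ (le_of_lt hμ)) _
      _ = ENNReal.ofReal C * ∫⁻ μ in Ioi (0:ℝ),
            ENNReal.ofReal ((max (μ - 0) 0) ^ α * Real.exp (-(t * μ))) := by
          rw [← lintegral_const_mul' _ _ ENNReal.ofReal_ne_top]
          refine setLIntegral_congr_fun measurableSet_Ioi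
            (fun μ (hμ : μ ∈ Ioi (0:ℝ)) => ?_)
          rw [sub_zero, max_eq_left (le_of_lt hμ),
            ENNReal.ofReal_mul hC.le, ENNReal.ofReal_mul (Real.rpow_nonneg (le_of_lt hμ) _),
            mul_assoc]
      _ = ENNReal.ofReal (C * ((1 / t) ^ (α + 1) * Real.Gamma (α + 1))) := by
          rw [aux_shift hα ht le_rfl]
          simp [← ENNReal.ofReal_mul hC.le]
  have hKD : ENNReal.ofReal K = ENNReal.ofReal (K / D) * ENNReal.ofReal D := by
    rw [← ENNReal.ofReal_mul (by positivity), div_mul_cancel₀ _ hDpos.ne']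
  have final : K / D * (C * ((1 / t) ^ (α + 1) * Real.Gamma (α + 1))) =
      C * (γ / Real.exp 1) ^ γ * (Real.exp 1 / α) ^ α *
        (Real.Gamma (α + 1) / Real.Gamma (γ + 1)) * lam ^ α := by
    have hinv : ∀ x : ℝ, (1 / t) ^ x = t ^ (-x) := fun x => by
      rw [Real.rpow_neg ht.le, one_div, Real.inv_rpow ht.le]
    have hea : (Real.exp 1 / α) ^ α = Real.exp α / α ^ α := by
      rw [Real.div_rpow (Real.exp_pos 1).le hα.le, Real.exp_one_rpow]
    have hpow : t ^ (-γ) * t ^ (-(α + 1)) / t ^ (-(γ + 1)) = lam ^ α / α ^ α := by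
      rw [← Real.rpow_add ht, ← Real.rpow_sub ht,
        show -γ + -(α + 1) - -(γ + 1) = -α by ring,
        Real.rpow_neg ht.le, ← Real.inv_rpow ht.le,
        show t⁻¹ = lam / α by rw [htdef, inv_div],
        Real.div_rpow hlam.le hα.le]
    have hαα : (0:ℝ) < α ^ α := Real.rpow_pos_of_pos hα α
    have hP3 : (0:ℝ) < t ^ (-(γ + 1)) := Real.rpow_pos_of_pos ht _
    have hlamα : lam ^ α = t ^ (-γ) * t ^ (-(α + 1)) / t ^ (-(γ + 1)) * α ^ α := by
      rw [hpow, div_mul_cancel₀ _ hαα.ne']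
    rw [hK, hD, htl, hinv, hinv, hea, hlamα]
    field_simp
  calc ∑' j, ENNReal.ofReal ((max (lam - F j) 0) ^ γ)
      ≤ ∑' j, ENNReal.ofReal K * ENNReal.ofReal (Real.exp (-t * F j)) :=
        ENNReal.tsum_le_tsum step1
    _ = ENNReal.ofReal K * ∑' j, ENNReal.ofReal (Real.exp (-t * F j)) :=
        ENNReal.tsum_mul_left
    _ ≤ ENNReal.ofReal K * ∑' j, ENNReal.ofReal (Real.exp (-t * E j)) :=
        _root_.mul_le_mul_right (hdom t ht) _
    _ = ENNReal.ofReal (K / D) * (ENNReal.ofReal D *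
          ∑' j, ENNReal.ofReal (Real.exp (-t * E j))) := by rw [hKD, mul_assoc]
    _ ≤ ENNReal.ofReal (K / D) *
          ENNReal.ofReal (C * ((1 / t) ^ (α + 1) * Real.Gamma (α + 1))) :=
        _root_.mul_le_mul_right hDS _
    _ = ENNReal.ofReal (K / D * (C * ((1 / t) ^ (α + 1) * Real.Gamma (α + 1)))) :=
        (ENNReal.ofReal_mul (by positivity)).symm
    _ = ENNReal.ofReal (C * (γ / Real.exp 1) ^ γ * (Real.exp 1 / α) ^ α *
          (Real.Gamma (α + 1) / Real.Gamma (γ + 1)) * lam ^ α) := by rw [final]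
end

section
/- Let ι be a countable index set, E : ι → ℝ a family of nonnegative real numbers, and let γ > 0, α ≥ 0, C ≥ 0 be real numbers such that for every λ ≥ 0 one has ∑'_{j∈ι} ((λ - E_j)_+)^γ ≤ C·λ^α. Then for every t > 0 one has ∑'_{j∈ι} exp(-t·E_j) ≤ C·(Γ(α+1)/Γ(γ+1))·t^{γ-α}. -/
open MeasureTheory Set

/-- The Gamma-type lintegral: `∫⁻ s in (0,∞), s^a * exp(-t s) = Γ(a+1) (1/t)^(a+1)`. -/
lemma gamma_lintegral_aux {a t : ℝ} (ha : 0 ≤ a) (ht : 0 < t) :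
    ∫⁻ s in Ioi (0 : ℝ), ENNReal.ofReal (s ^ a * Real.exp (-t * s)) =
      ENNReal.ofReal (Real.Gamma (a + 1) * (1 / t) ^ (a + 1)) := by
  have hint : IntegrableOn (fun s : ℝ => s ^ a * Real.exp (-t * s)) (Ioi 0) := by
    have := integrableOn_rpow_mul_exp_neg_mul_rpow (by linarith : (-1 : ℝ) < a)
      (zero_lt_one' ℝ) ht
    simpa [Real.rpow_one] using this
  rw [← ofReal_integral_eq_lintegral_ofReal hint ?nn]
  case nn =>
    filter_upwards [ae_restrict_mem measurableSet_Ioi] with s hs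
    exact mul_nonneg (Real.rpow_nonneg (le_of_lt hs) _) (Real.exp_pos _).le
  congr 1
  have := Real.integral_rpow_mul_exp_neg_mul_Ioi (by linarith : (0 : ℝ) < a + 1) ht
  rw [show a + 1 - 1 = a by ring] at this
  rw [show (∫ s in Ioi (0:ℝ), s ^ a * Real.exp (-t * s))
      = ∫ s in Ioi (0:ℝ), s ^ a * Real.exp (-(t * s)) by
    refine setIntegral_congr_fun measurableSet_Ioi fun s _ => ?_
    rw [neg_mul]]
  rw [this, mul_comm]

/-- a Riesz-mean bound `∑ ((λ-E_j)_+)^γ ≤ C λ^α` implies the heat-trace bound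
`∑ e^{-t E_j} ≤ C (Γ(α+1)/Γ(γ+1)) t^{γ-α}`. -/
theorem stmt_3 {ι : Type*} [Countable ι] (E : ι → ℝ) (γ α C : ℝ)
    (hE : ∀ j, 0 ≤ E j) (hγ : 0 < γ) (hα : 0 ≤ α) (hC : 0 ≤ C)
    (h : ∀ lam : ℝ, 0 ≤ lam →
      ∑' j, ENNReal.ofReal ((max (lam - E j) 0) ^ γ) ≤ ENNReal.ofReal (C * lam ^ α)) :
    ∀ t : ℝ, 0 < t →
      ∑' j, ENNReal.ofReal (Real.exp (-t * E j)) ≤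
        ENNReal.ofReal (C * (Real.Gamma (α + 1) / Real.Gamma (γ + 1)) * t ^ (γ - α)) := by
  intro t ht
  have hΓγ : 0 < Real.Gamma (γ + 1) := Real.Gamma_pos_of_pos (by linarith)
  have hΓα : 0 < Real.Gamma (α + 1) := Real.Gamma_pos_of_pos (by linarith)
  set k : ENNReal := ENNReal.ofReal (Real.Gamma (γ + 1) * (1 / t) ^ (γ + 1)) with hkdef
  have hkpos : (0 : ℝ) < Real.Gamma (γ + 1) * (1 / t) ^ (γ + 1) :=
    mul_pos hΓγ (Real.rpow_pos_of_pos (by positivity) _)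
  have hk0 : k ≠ 0 := by
    simp only [hkdef, ne_eq, ENNReal.ofReal_eq_zero, not_le]
    exact hkpos
  have hktop : k ≠ ⊤ := ENNReal.ofReal_ne_top
  -- the pointwise integrand
  set F : ι → ℝ → ENNReal := fun j lam =>
    ENNReal.ofReal ((max (lam - E j) 0) ^ γ * Real.exp (-t * lam)) with hFdef
  have hFmeas : ∀ j, Measurable (F j) := by
    intro j
    apply Measurable.ennreal_ofReal
    apply Measurable.mul
    · exact (((continuous_id.sub continuous_const).max continuous_const).rpow_const
        (fun _ => Or.inr hγ.le)).measurable
    · exact (Real.continuous_exp.comp (continuous_const.mul continuous_id)).measurable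
  -- per-index computation of the lintegral
  have key : ∀ j, ∫⁻ lam in Ioi (0 : ℝ), F j lam
      = ENNReal.ofReal (Real.exp (-t * E j)) * k := by
    intro j
    have hsplit : Ioc (0 : ℝ) (E j) ∪ Ioi (E j) = Ioi 0 := Ioc_union_Ioi_eq_Ioi (hE j)
    have hdisj : Disjoint (Ioc (0 : ℝ) (E j)) (Ioi (E j)) := Ioc_disjoint_Ioi le_rfl
    rw [← hsplit, lintegral_union measurableSet_Ioi hdisj]
    have h1 : ∫⁻ lam in Ioc (0 : ℝ) (E j), F j lam = 0 := by
      rw [setLIntegral_congr_fun measurableSet_Ioc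
        (fun lam hlam => ?_), lintegral_zero]
      have : max (lam - E j) 0 = 0 := max_eq_right (by linarith [hlam.2])
      simp [hFdef, this, Real.zero_rpow hγ.ne']
    have h2 : ∫⁻ lam in Ioi (E j), F j lam
        = ENNReal.ofReal (Real.exp (-t * E j)) * k := by
      have hmp : MeasurePreserving (fun x : ℝ => x + E j) volume volume :=
        measurePreserving_add_right volume (E j)
      have hpre : (fun x : ℝ => x + E j) ⁻¹' Ioi (E j) = Ioi 0 := by
        ext x; simp [lt_add_iff_pos_left]
      have := hmp.setLIntegral_comp_preimage (s := Ioi (E j)) measurableSet_Ioi (hFmeas j)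
      rw [hpre] at this
      rw [← this]
      have hcongr : ∫⁻ s in Ioi (0 : ℝ), F j (s + E j)
          = ∫⁻ s in Ioi (0 : ℝ),
              ENNReal.ofReal (Real.exp (-t * E j)) *
                ENNReal.ofReal (s ^ γ * Real.exp (-t * s)) := by
        refine setLIntegral_congr_fun measurableSet_Ioi fun s hs => ?_
        have h1 : max (s + E j - E j) 0 = s := by
          rw [add_sub_cancel_right]; exact max_eq_left (le_of_lt hs)
        have h2 : Real.exp (-t * (s + E j)) = Real.exp (-t * E j) * Real.exp (-t * s) := by
          rw [← Real.exp_add]; ring_nf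
        rw [hFdef]
        simp only [h1, h2, ← ENNReal.ofReal_mul (Real.exp_pos _).le]
        ring_nf
      rw [hcongr, lintegral_const_mul _ (by
        apply Measurable.ennreal_ofReal
        exact ((continuous_id.rpow_const (fun _ => Or.inr hγ.le)).mul
          (Real.continuous_exp.comp (continuous_const.mul continuous_id))).measurable)]
      rw [gamma_lintegral_aux hγ.le ht]
    rw [h1, h2, zero_add]
  -- sum over j and swap with the integral
  have hsum : (∑' j, ENNReal.ofReal (Real.exp (-t * E j))) * k
      = ∫⁻ lam in Ioi (0 : ℝ), ∑' j, F j lam := by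
    rw [lintegral_tsum (fun j => (hFmeas j).aemeasurable)]
    simp_rw [key]
    rw [ENNReal.tsum_mul_right]
  -- bound the inner sum using the hypothesis
  have hbound : ∫⁻ lam in Ioi (0 : ℝ), ∑' j, F j lam
      ≤ ∫⁻ lam in Ioi (0 : ℝ), ENNReal.ofReal (C * lam ^ α * Real.exp (-t * lam)) := by
    refine setLIntegral_mono' measurableSet_Ioi fun lam hlam => ?_
    have hexp : (0 : ℝ) ≤ Real.exp (-t * lam) := (Real.exp_pos _).le
    calc ∑' j, F j lam
        = (∑' j, ENNReal.ofReal ((max (lam - E j) 0) ^ γ)) *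
            ENNReal.ofReal (Real.exp (-t * lam)) := by
          rw [← ENNReal.tsum_mul_right]
          refine tsum_congr fun j => ?_
          simp only [hFdef]
          rw [ENNReal.ofReal_mul (Real.rpow_nonneg (le_max_right _ _) _)]
      _ ≤ ENNReal.ofReal (C * lam ^ α) * ENNReal.ofReal (Real.exp (-t * lam)) :=
          mul_le_mul_left (h lam (le_of_lt hlam)) _
      _ = ENNReal.ofReal (C * lam ^ α * Real.exp (-t * lam)) := by
          rw [← ENNReal.ofReal_mul (mul_nonneg hC (Real.rpow_nonneg (le_of_lt hlam) _))]
  -- compute the right-hand integral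
  have hrhs : ∫⁻ lam in Ioi (0 : ℝ), ENNReal.ofReal (C * lam ^ α * Real.exp (-t * lam))
      = ENNReal.ofReal C * ENNReal.ofReal (Real.Gamma (α + 1) * (1 / t) ^ (α + 1)) := by
    have hcongr : ∫⁻ lam in Ioi (0 : ℝ), ENNReal.ofReal (C * lam ^ α * Real.exp (-t * lam))
        = ∫⁻ lam in Ioi (0 : ℝ),
            ENNReal.ofReal C * ENNReal.ofReal (lam ^ α * Real.exp (-t * lam)) := by
      refine setLIntegral_congr_fun measurableSet_Ioi fun lam hlam => ?_
      rw [← ENNReal.ofReal_mul hC, mul_assoc]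
    rw [hcongr, lintegral_const_mul _ (by
      apply Measurable.ennreal_ofReal
      exact ((continuous_id.rpow_const (fun _ => Or.inr hα)).mul
        (Real.continuous_exp.comp (continuous_const.mul continuous_id))).measurable)]
    rw [gamma_lintegral_aux hα ht]
  -- put everything together
  have hfinal : (∑' j, ENNReal.ofReal (Real.exp (-t * E j))) * k
      ≤ ENNReal.ofReal (C * (Real.Gamma (α + 1) / Real.Gamma (γ + 1)) * t ^ (γ - α)) * k := by
    rw [hsum]
    refine hbound.trans (le_of_eq ?_)
    rw [hrhs, hkdef, ← ENNReal.ofReal_mul hC, ← ENNReal.ofReal_mul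
      (mul_nonneg (mul_nonneg hC (div_nonneg hΓα.le hΓγ.le)) (Real.rpow_nonneg ht.le _))]
    congr 1
    have hinv : ∀ x : ℝ, (1 / t) ^ x = t ^ (-x) := by
      intro x
      rw [one_div, Real.inv_rpow ht.le, ← Real.rpow_neg ht.le]
    have hpow : t ^ (γ - α) * t ^ (-(γ + 1)) = t ^ (-(α + 1)) := by
      rw [← Real.rpow_add ht]; congr 1; ring
    rw [hinv, hinv, ← hpow]
    field_simp
  exact (ENNReal.mul_le_mul_iff_left hk0 hktop).mp hfinal
end

section
/- Let ι be a countable index set and E : ι → ℝ a family of real numbers. Let σ > γ > 0, κ ≥ 0 and C > 0 be real numbers, and define b(γ,σ) := σ^{-σ}·γ^γ·(σ-γ)^{σ-γ}. Assume that for every λ > 0 one has ∑'_{j∈ι} ((λ - E_j)_+)^σ ≤ C·λ^{σ+κ}. Then for every λ > 0 one has ∑'_{j∈ι} ((λ - E_j)_+)^γ ≤ C·(b(γ,σ)/b(γ+κ,σ+κ))·λ^{γ+κ}. -/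
/-- The constant `b(γ,σ) = σ^{-σ} γ^γ (σ-γ)^{σ-γ}` from Lemma 3.2 of the paper
(real powers). -/
noncomputable def lemmaB (γ σ : ℝ) : ℝ := σ ^ (-σ) * γ ^ γ * (σ - γ) ^ (σ - γ)

lemma lemmaB_pos {x y : ℝ} (hx : 0 < x) (hxy : x < y) : 0 < lemmaB x y := by
  have hy : 0 < y := hx.trans hxy
  have hyx : 0 < y - x := sub_pos.2 hxy
  unfold lemmaB
  positivity

lemma log_lemmaB {x y : ℝ} (hx : 0 < x) (hxy : x < y) :
    Real.log (lemmaB x y) =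
      -y * Real.log y + x * Real.log x + (y - x) * Real.log (y - x) := by
  have hy : 0 < y := hx.trans hxy
  have hyx : 0 < y - x := sub_pos.2 hxy
  unfold lemmaB
  rw [Real.log_mul (by positivity) (by positivity),
    Real.log_mul (by positivity) (by positivity),
    Real.log_rpow hy, Real.log_rpow hx, Real.log_rpow hyx]

lemma eq_of_pos_of_log_eq {x y : ℝ} (hx : 0 < x) (hy : 0 < y)
    (h : Real.log x = Real.log y) : x = y := by
  rw [← Real.exp_log hx, ← Real.exp_log hy, h]

/-- pointwise key inequality -/
lemma key_ineq {γ σ s a : ℝ} (hγ : 0 < γ) (hγσ : γ < σ) (hs : 0 ≤ s) (ha : 0 < a) :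
    s ^ γ ≤ lemmaB γ σ * a ^ (γ - σ) * (s + a) ^ σ := by
  have hσ : 0 < σ := hγ.trans hγσ
  have hsg : 0 < σ - γ := sub_pos.2 hγσ
  set w₁ : ℝ := γ / σ with hw₁
  set w₂ : ℝ := (σ - γ) / σ with hw₂
  set p₁ : ℝ := s * σ / γ with hp₁
  set p₂ : ℝ := a * σ / (σ - γ) with hp₂
  have hp₁0 : 0 ≤ p₁ := by positivity
  have hp₂0 : 0 < p₂ := by positivity
  have hw : w₁ + w₂ = 1 := by rw [hw₁, hw₂]; field_simp; ring
  have hAM : p₁ ^ w₁ * p₂ ^ w₂ ≤ w₁ * p₁ + w₂ * p₂ :=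
    Real.geom_mean_le_arith_mean2_weighted (by positivity) (by positivity) hp₁0 hp₂0.le hw
  have hsum : w₁ * p₁ + w₂ * p₂ = s + a := by
    rw [hw₁, hw₂, hp₁, hp₂]; field_simp
  set L : ℝ := p₁ ^ w₁ * p₂ ^ w₂ with hL
  have hL0 : 0 ≤ L := by positivity
  have hLe : L ≤ s + a := by rw [hL]; rw [hsum] at hAM; exact hAM
  have hpow : L ^ σ ≤ (s + a) ^ σ := Real.rpow_le_rpow hL0 hLe hσ.le
  have hB : 0 < lemmaB γ σ := lemmaB_pos hγ hγσ
  have hc : 0 < lemmaB γ σ * a ^ (γ - σ) := by positivity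
  have hEq : s ^ γ = L ^ σ * (lemmaB γ σ * a ^ (γ - σ)) := by
    rcases eq_or_lt_of_le hs with h0 | hspos
    · have : p₁ = 0 := by rw [hp₁, ← h0]; ring
      rw [← h0, Real.zero_rpow hγ.ne', hL, this, Real.zero_rpow (by positivity : w₁ ≠ 0),
        zero_mul, Real.zero_rpow hσ.ne', zero_mul]
    · have hp₁pos : 0 < p₁ := by positivity
      have hLpos : 0 < L := by positivity
      apply eq_of_pos_of_log_eq (by positivity) (by positivity)
      rw [Real.log_rpow hspos, Real.log_mul (by positivity) (by positivity),
        Real.log_rpow hLpos, hL,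
        Real.log_mul (by positivity) (by positivity),
        Real.log_rpow hp₁pos, Real.log_rpow hp₂0,
        Real.log_mul hB.ne' (by positivity), Real.log_rpow ha,
        log_lemmaB hγ hγσ, hp₁, hp₂,
        Real.log_div (by positivity) (by positivity),
        Real.log_div (by positivity) (by positivity),
        Real.log_mul (by positivity) (by positivity),
        Real.log_mul (by positivity) (by positivity), hw₁, hw₂]
      field_simp
      ring
  calc s ^ γ = L ^ σ * (lemmaB γ σ * a ^ (γ - σ)) := hEq
    _ ≤ (s + a) ^ σ * (lemmaB γ σ * a ^ (γ - σ)) := by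
        exact mul_le_mul_of_nonneg_right hpow hc.le
    _ = lemmaB γ σ * a ^ (γ - σ) * (s + a) ^ σ := by ring

/-- a Riesz-mean bound of order `σ` implies one of order `γ < σ` with
constant multiplied by `b(γ,σ)/b(γ+κ,σ+κ)`. -/
theorem stmt_7 {ι : Type*} [Countable ι] (E : ι → ℝ) (γ σ κ C : ℝ)
    (hγ : 0 < γ) (hγσ : γ < σ) (hκ : 0 ≤ κ) (hC : 0 < C)
    (h : ∀ lam : ℝ, 0 < lam →
      ∑' j, ENNReal.ofReal ((max (lam - E j) 0) ^ σ) ≤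
        ENNReal.ofReal (C * lam ^ (σ + κ))) :
    ∀ lam : ℝ, 0 < lam →
      ∑' j, ENNReal.ofReal ((max (lam - E j) 0) ^ γ) ≤
        ENNReal.ofReal (C * (lemmaB γ σ / lemmaB (γ + κ) (σ + κ)) * lam ^ (γ + κ)) := by
  intro lam hlam
  have hσ : 0 < σ := hγ.trans hγσ
  have hsg : 0 < σ - γ := sub_pos.2 hγσ
  have hγκ : 0 < γ + κ := by linarith
  have hσκ : 0 < σ + κ := by linarith
  set μ : ℝ := lam * (σ + κ) / (γ + κ) with hμdef
  set a : ℝ := lam * (σ - γ) / (γ + κ) with hadef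
  have hμ : 0 < μ := by positivity
  have ha : 0 < a := by positivity
  have hμa : μ = lam + a := by rw [hμdef, hadef]; field_simp; ring
  have hB1 : 0 < lemmaB γ σ := lemmaB_pos hγ hγσ
  have hB2 : 0 < lemmaB (γ + κ) (σ + κ) := lemmaB_pos hγκ (by linarith)
  set K : ℝ := lemmaB γ σ * a ^ (γ - σ) with hKdef
  have hKpos : 0 < K := by positivity
  have hpt : ∀ j, ENNReal.ofReal ((max (lam - E j) 0) ^ γ) ≤
      ENNReal.ofReal (K * (max (μ - E j) 0) ^ σ) := by
    intro j
    apply ENNReal.ofReal_le_ofReal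
    rcases le_or_gt (lam - E j) 0 with hle | hlt
    · rw [max_eq_right hle, Real.zero_rpow hγ.ne']
      have : (0:ℝ) ≤ max (μ - E j) 0 := le_max_right _ _
      positivity
    · have h1 : max (lam - E j) 0 = lam - E j := max_eq_left hlt.le
      have h2 : max (μ - E j) 0 = (lam - E j) + a := by
        rw [max_eq_left (by rw [hμa]; linarith)]
        rw [hμa]; ring
      rw [h1, h2, hKdef]
      exact key_ineq hγ hγσ hlt.le ha
  calc ∑' j, ENNReal.ofReal ((max (lam - E j) 0) ^ γ)
      ≤ ∑' j, ENNReal.ofReal (K * (max (μ - E j) 0) ^ σ) := ENNReal.tsum_le_tsum hpt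
    _ = ENNReal.ofReal K * ∑' j, ENNReal.ofReal ((max (μ - E j) 0) ^ σ) := by
        simp_rw [ENNReal.ofReal_mul hKpos.le]; exact ENNReal.tsum_mul_left
    _ ≤ ENNReal.ofReal K * ENNReal.ofReal (C * μ ^ (σ + κ)) := by
        exact mul_le_mul_right (h μ hμ) _
    _ = ENNReal.ofReal (K * (C * μ ^ (σ + κ))) := (ENNReal.ofReal_mul hKpos.le).symm
    _ = ENNReal.ofReal (C * (lemmaB γ σ / lemmaB (γ + κ) (σ + κ)) * lam ^ (γ + κ)) := by
        congr 1
        apply eq_of_pos_of_log_eq (by positivity) (by positivity)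
        have hd : σ + κ - (γ + κ) = σ - γ := by ring
        rw [Real.log_mul hKpos.ne' (by positivity),
          Real.log_mul hC.ne' (by positivity), Real.log_rpow hμ,
          hKdef, Real.log_mul hB1.ne' (by positivity), Real.log_rpow ha,
          Real.log_mul (by positivity) (by positivity),
          Real.log_mul hC.ne' (by positivity), Real.log_rpow hlam,
          Real.log_div hB1.ne' hB2.ne',
          log_lemmaB hγκ (by linarith), hd,
          log_lemmaB hγ hγσ,
          hadef, hμdef,
          Real.log_div (by positivity) (by positivity),
          Real.log_div (by positivity) (by positivity),
          Real.log_mul hlam.ne' hsg.ne',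
          Real.log_mul hlam.ne' hσκ.ne']
        ring
end

section
/- Let ι be a countable index set and E : ι → ℝ a family of real numbers. Let σ > 0, κ > 0 and C > 0 be real numbers, and assume that for every λ > 0 one has ∑'_{j∈ι} ((λ - E_j)_+)^σ ≤ C·λ^{σ+κ}. Then for every λ > 0 the set {j ∈ ι : E_j < λ} is finite and its cardinality is at most C·(σ+κ)^{σ+κ}·κ^{-κ}·σ^{-σ}·λ^κ. -/
/-- γ = 0 case of Lemma 3.2: a Riesz-mean bound of order `σ` bounds the
eigenvalue counting function: `#{j : E_j < λ} ≤ C (σ+κ)^{σ+κ} κ^{-κ} σ^{-σ} λ^κ`. -/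
theorem stmt_8 {ι : Type*} [Countable ι] (E : ι → ℝ) (σ κ C : ℝ)
    (hσ : 0 < σ) (hκ : 0 < κ) (hC : 0 < C)
    (h : ∀ lam : ℝ, 0 < lam →
      ∑' j, ENNReal.ofReal ((max (lam - E j) 0) ^ σ) ≤
        ENNReal.ofReal (C * lam ^ (σ + κ))) :
    ∀ lam : ℝ, 0 < lam →
      {j | E j < lam}.Finite ∧
        ({j | E j < lam}.ncard : ℝ) ≤
          C * (σ + κ) ^ (σ + κ) * κ ^ (-κ) * σ ^ (-σ) * lam ^ κ := by
  intro lam hlam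
  set S := {j | E j < lam} with hS
  set μ := lam * (σ + κ) / κ with hμ
  have hμpos : 0 < μ := by positivity
  have hcpos : (0:ℝ) < (lam * σ / κ) ^ σ := by positivity
  have hgap : μ - lam = lam * σ / κ := by field_simp [hμ]; rw [hμ, sub_mul, div_mul_cancel₀ _ hκ.ne']; ring
  -- key pointwise bound on S
  have hpt : ∀ j ∈ S, ENNReal.ofReal ((lam * σ / κ) ^ σ) ≤
      ENNReal.ofReal ((max (μ - E j) 0) ^ σ) := by
    intro j hj
    apply ENNReal.ofReal_le_ofReal
    have h1 : lam * σ / κ ≤ μ - E j := by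
      rw [← hgap]; simp only [hS, Set.mem_setOf_eq] at hj; linarith
    have h2 : lam * σ / κ ≤ max (μ - E j) 0 := le_trans h1 (le_max_left _ _)
    exact Real.rpow_le_rpow (by positivity) h2 hσ.le
  set c := ENNReal.ofReal ((lam * σ / κ) ^ σ) with hc
  have hcne : c ≠ 0 := by
    simp only [hc, ne_eq, ENNReal.ofReal_eq_zero, not_le]
    exact hcpos
  have hsum : ∑' j : S, c ≤ ENNReal.ofReal (C * μ ^ (σ + κ)) := by
    calc ∑' j : S, c ≤ ∑' j : S, ENNReal.ofReal ((max (μ - E (j:ι)) 0) ^ σ) :=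
          ENNReal.tsum_le_tsum (fun j => hpt j j.2)
      _ ≤ ∑' j, ENNReal.ofReal ((max (μ - E j) 0) ^ σ) :=
          ENNReal.tsum_comp_le_tsum_of_injective Subtype.val_injective _
      _ ≤ _ := h μ hμpos
  have hfin : S.Finite := by
    by_contra hinf
    haveI : Infinite S := Set.infinite_coe_iff.mpr hinf
    rw [ENNReal.tsum_const_eq_top_of_ne_zero hcne] at hsum
    exact ENNReal.ofReal_ne_top (top_le_iff.mp hsum)
  refine ⟨hfin, ?_⟩
  haveI := hfin.fintype
  have hcard : ∑' _ : S, c = (S.ncard : ENNReal) * c := by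
    rw [tsum_fintype]
    rw [Finset.sum_const, Finset.card_univ, Set.fintypeCard_eq_ncard, nsmul_eq_mul]
  rw [hcard] at hsum
  -- convert to real inequality
  have hreal : (S.ncard : ℝ) * ((lam * σ / κ) ^ σ) ≤ C * μ ^ (σ + κ) := by
    have := hsum
    rw [hc, ← ENNReal.ofReal_natCast, ← ENNReal.ofReal_mul (by positivity)] at this
    exact (ENNReal.ofReal_le_ofReal_iff (by positivity)).mp this
  have hkey : C * μ ^ (σ + κ) / ((lam * σ / κ) ^ σ) =
      C * (σ + κ) ^ (σ + κ) * κ ^ (-κ) * σ ^ (-σ) * lam ^ κ := by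
    rw [hμ]
    rw [Real.div_rpow (by positivity) hκ.le, Real.mul_rpow hlam.le (by positivity),
        Real.div_rpow (by positivity) hκ.le, Real.mul_rpow hlam.le hσ.le,
        Real.rpow_add hlam, Real.rpow_add hκ, Real.rpow_neg hκ.le, Real.rpow_neg hσ.le]
    have h1 : (0:ℝ) < lam ^ σ := Real.rpow_pos_of_pos hlam σ
    have h2 : (0:ℝ) < lam ^ κ := Real.rpow_pos_of_pos hlam κ
    have h3 : (0:ℝ) < σ ^ σ := Real.rpow_pos_of_pos hσ σ
    have h4 : (0:ℝ) < κ ^ σ := Real.rpow_pos_of_pos hκ σ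
    have h5 : (0:ℝ) < κ ^ κ := Real.rpow_pos_of_pos hκ κ
    field_simp
  rw [← hkey]
  rw [le_div_iff₀ hcpos]
  exact hreal
end

section
/- Let σ > γ > 0 be real numbers and let μ > λ be real numbers. Then for every E ∈ ℝ one has ((λ - E)_+)^γ ≤ σ^{-σ}·γ^γ·(σ-γ)^{σ-γ}·(μ-λ)^{γ-σ}·((μ - E)_+)^σ. -/
/-- the pointwise inequality
`((λ-E)_+)^γ ≤ σ^{-σ} γ^γ (σ-γ)^{σ-γ} (μ-λ)^{γ-σ} ((μ-E)_+)^σ` for `σ > γ > 0`, `μ > λ`. -/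
theorem stmt_9 (γ σ : ℝ) (hγ : 0 < γ) (hγσ : γ < σ) (lam μ : ℝ) (hlm : lam < μ) (E : ℝ) :
    (max (lam - E) 0) ^ γ ≤
      σ ^ (-σ) * γ ^ γ * (σ - γ) ^ (σ - γ) * (μ - lam) ^ (γ - σ) * (max (μ - E) 0) ^ σ := by
  have hσ : (0:ℝ) < σ := hγ.trans hγσ
  have hsg : (0:ℝ) < σ - γ := sub_pos.2 hγσ
  have hd : (0:ℝ) < μ - lam := sub_pos.2 hlm
  by_cases hE : lam ≤ E
  · have h0 : max (lam - E) 0 = 0 := max_eq_right (by linarith)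
    rw [h0, Real.zero_rpow hγ.ne']
    positivity
  · push_neg at hE
    have ha : (0:ℝ) < lam - E := sub_pos.2 hE
    have hae : (0:ℝ) < μ - E := by linarith
    rw [max_eq_left ha.le, max_eq_left hae.le]
    set a := lam - E with hadef
    set d := μ - lam with hddef
    have hsum : μ - E = a + d := by rw [hadef, hddef]; ring
    rw [hsum]
    -- weighted AM-GM
    have key := Real.geom_mean_le_arith_mean2_weighted
      (w₁ := γ/σ) (w₂ := (σ-γ)/σ) (p₁ := σ/γ*a) (p₂ := σ/(σ-γ)*d)
      (by positivity) (by positivity) (by positivity) (by positivity)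
      (by field_simp; ring)
    have hrhs : γ/σ * (σ/γ*a) + (σ-γ)/σ * (σ/(σ-γ)*d) = a + d := by
      field_simp
    rw [hrhs] at key
    have key2 : ((σ/γ*a) ^ (γ/σ) * (σ/(σ-γ)*d) ^ ((σ-γ)/σ)) ^ σ ≤ (a+d) ^ σ :=
      Real.rpow_le_rpow (by positivity) key hσ.le
    have hx : (0:ℝ) < σ/γ*a := by positivity
    have hy : (0:ℝ) < σ/(σ-γ)*d := by positivity
    rw [Real.mul_rpow (by positivity) (by positivity),
        ← Real.rpow_mul hx.le, ← Real.rpow_mul hy.le,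
        div_mul_cancel₀ _ hσ.ne', div_mul_cancel₀ _ hσ.ne',
        Real.mul_rpow (by positivity) ha.le,
        Real.mul_rpow (by positivity) hd.le] at key2
    -- key2 : (σ/γ)^γ * a^γ * ((σ/(σ-γ))^(σ-γ) * d^(σ-γ)) ≤ (a+d)^σ
    set K := (σ/γ)^γ * ((σ/(σ-γ))^(σ-γ) * d^(σ-γ)) with hKdef
    have hK : 0 < K := by rw [hKdef]; positivity
    have key3 : a ^ γ ≤ (a+d) ^ σ / K := by
      rw [le_div_iff₀ hK]
      calc a ^ γ * K = (σ/γ)^γ * a^γ * ((σ/(σ-γ))^(σ-γ) * d^(σ-γ)) := by rw [hKdef]; ring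
        _ ≤ (a+d)^σ := key2
    have hσσ : σ ^ γ * σ ^ (σ - γ) = σ ^ σ := by
      rw [← Real.rpow_add hσ]; ring_nf
    have hid : σ^(-σ) * γ^γ * (σ-γ)^(σ-γ) * d^(γ-σ) * K = 1 := by
      rw [hKdef, Real.div_rpow hσ.le hγ.le, Real.div_rpow hσ.le hsg.le,
        Real.rpow_neg hσ.le, show γ - σ = -(σ-γ) by ring, Real.rpow_neg hd.le]
      have h1 : (0:ℝ) < γ ^ γ := by positivity
      have h2 : (0:ℝ) < (σ-γ) ^ (σ-γ) := by positivity
      have h3 : (0:ℝ) < d ^ (σ-γ) := by positivity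
      have h4 : (0:ℝ) < σ ^ σ := by positivity
      field_simp
      rw [← hσσ]
    calc a ^ γ ≤ (a+d) ^ σ / K := key3
      _ = σ^(-σ) * γ^γ * (σ-γ)^(σ-γ) * d^(γ-σ) * (a+d)^σ := by
          rw [eq_comm, eq_div_iff hK.ne']
          calc σ^(-σ) * γ^γ * (σ-γ)^(σ-γ) * d^(γ-σ) * (a+d)^σ * K
              = (σ^(-σ) * γ^γ * (σ-γ)^(σ-γ) * d^(γ-σ) * K) * (a+d)^σ := by ring
            _ = (a+d)^σ := by rw [hid]; ring
end

section
/- Let d ≥ 2 be an integer, let 0 < γ < 3/2, and let V ≥ 0 be a real number. Define L^cl(s) := Γ(s+1)/(2^d·π^{d/2}·Γ(s + d/2 + 1)) for s ≥ 0, and ρ := (Γ(5/2)·Γ(γ+d/2+1)/(Γ((5+d)/2)·Γ(γ+1)))·3^{-3/2}·(3+d)^{(3+d)/2}·(2γ)^γ·(2γ+d)^{-γ-d/2}. Let ι be a countable index set and E : ι → ℝ a family of nonnegative real numbers such that for every λ > 0 one has ∑'_{j∈ι} ((λ - E_j)_+)^{3/2} ≤ L^cl(3/2)·V·λ^{3/2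 + d/2}. Then for every λ > 0 one has ∑'_{j∈ι} ((λ - E_j)_+)^γ ≤ ρ·L^cl(γ)·V·λ^{γ + d/2}. -/
/-- The semiclassical constant `L^cl_{s,d} = Γ(s+1)/(2^d π^{d/2} Γ(s+d/2+1))`. -/
noncomputable def Lcl (d : ℕ) (s : ℝ) : ℝ :=
  Real.Gamma (s + 1) / (2 ^ d * Real.pi ^ ((d : ℝ) / 2) * Real.Gamma (s + (d : ℝ) / 2 + 1))

/-- The excess constant `ρ_{γ,d}` of Theorem 3.1 of the paper. -/
noncomputable def rhoConst (d : ℕ) (γ : ℝ) : ℝ :=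
  (Real.Gamma (5 / 2) * Real.Gamma (γ + (d : ℝ) / 2 + 1) /
      (Real.Gamma ((5 + (d : ℝ)) / 2) * Real.Gamma (γ + 1))) *
    3 ^ (-(3 / 2) : ℝ) * (3 + (d : ℝ)) ^ ((3 + (d : ℝ)) / 2) *
    (2 * γ) ^ γ * (2 * γ + (d : ℝ)) ^ (-γ - (d : ℝ) / 2)

/-- Pointwise Aizenman–Lieb-type bound from weighted AM–GM:
`x^γ ≤ (2γ/3)^γ ((3-2γ)/3)^{3/2-γ} μ^{γ-3/2} (x+μ)^{3/2}`. -/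
lemma ptwise (γ : ℝ) (hγ0 : 0 < γ) (hγ : γ < 3/2) {x μ : ℝ} (hx : 0 ≤ x) (hμ : 0 < μ) :
    x ^ γ ≤ (2*γ/3) ^ γ * ((3-2*γ)/3) ^ ((3:ℝ)/2-γ) * μ ^ (γ-3/2) * (x+μ) ^ ((3:ℝ)/2) := by
  have hw₁ : (0:ℝ) < 2*γ/3 := by linarith
  have hw₂ : (0:ℝ) < (3-2*γ)/3 := by linarith
  have hp₁ : (0:ℝ) ≤ x / (2*γ/3) := div_nonneg hx hw₁.le
  have hp₂ : (0:ℝ) ≤ μ / ((3-2*γ)/3) := div_nonneg hμ.le hw₂.le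
  have key := Real.geom_mean_le_arith_mean2_weighted hw₁.le hw₂.le hp₁ hp₂ (by ring)
  have hsum : 2*γ/3 * (x / (2*γ/3)) + (3-2*γ)/3 * (μ / ((3-2*γ)/3)) = x + μ := by
    have hne1 : (3:ℝ)-2*γ ≠ 0 := by linarith
    have hne2 : (2:ℝ)*γ ≠ 0 := by positivity
    field_simp
  rw [hsum] at key
  have key2 : ((x / (2*γ/3)) ^ (2*γ/3) * (μ / ((3-2*γ)/3)) ^ ((3-2*γ)/3)) ^ ((3:ℝ)/2)
      ≤ (x+μ) ^ ((3:ℝ)/2) :=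
    Real.rpow_le_rpow (by positivity) key (by norm_num)
  have hrw : ((x / (2*γ/3)) ^ (2*γ/3) * (μ / ((3-2*γ)/3)) ^ ((3-2*γ)/3)) ^ ((3:ℝ)/2)
      = (x / (2*γ/3)) ^ γ * (μ / ((3-2*γ)/3)) ^ ((3:ℝ)/2-γ) := by
    rw [Real.mul_rpow (by positivity) (by positivity),
      ← Real.rpow_mul hp₁, ← Real.rpow_mul hp₂]
    congr 1 <;> congr 1 <;> ring
  rw [hrw, Real.div_rpow hx hw₁.le, Real.div_rpow hμ.le hw₂.le] at key2
  have h1 : (0:ℝ) < (2*γ/3) ^ γ := Real.rpow_pos_of_pos hw₁ _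
  have h2 : (0:ℝ) < ((3-2*γ)/3) ^ ((3:ℝ)/2-γ) := Real.rpow_pos_of_pos hw₂ _
  have h3 : (0:ℝ) < μ ^ ((3:ℝ)/2-γ) := Real.rpow_pos_of_pos hμ _
  have hμinv : μ ^ (γ-3/2) = (μ ^ ((3:ℝ)/2-γ))⁻¹ := by
    rw [← Real.rpow_neg hμ.le]; congr 1; ring
  rw [hμinv]
  rw [div_mul_div_comm, div_le_iff₀ (by positivity)] at key2
  calc x ^ γ = (x ^ γ * μ ^ ((3:ℝ)/2-γ)) * (μ ^ ((3:ℝ)/2-γ))⁻¹ := by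
        field_simp
    _ ≤ ((x+μ) ^ ((3:ℝ)/2) * ((2*γ/3) ^ γ * ((3-2*γ)/3) ^ ((3:ℝ)/2-γ))) * (μ ^ ((3:ℝ)/2-γ))⁻¹ := by
        apply mul_le_mul_of_nonneg_right key2 (by positivity)
    _ = (2*γ/3) ^ γ * ((3-2*γ)/3) ^ ((3:ℝ)/2-γ) * (μ ^ ((3:ℝ)/2-γ))⁻¹ * (x+μ) ^ ((3:ℝ)/2) := by
        ring

/-- Evaluation of the optimized constants. -/
lemma consts (d : ℕ) (γ lam : ℝ) (hD : 0 < (d:ℝ)) (hγ0 : 0 < γ) (hγ : γ < 3/2)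
    (hlam : 0 < lam) :
    (2*γ/3) ^ γ * ((3-2*γ)/3) ^ ((3:ℝ)/2-γ) * ((3-2*γ)/((d:ℝ)+2*γ)*lam) ^ (γ-3/2)
      * ((3+(d:ℝ))/((d:ℝ)+2*γ)*lam) ^ ((3:ℝ)/2+(d:ℝ)/2)
    = 3 ^ (-(3/2) : ℝ) * (3+(d:ℝ)) ^ ((3+(d:ℝ))/2) * (2*γ) ^ γ
      * (2*γ+(d:ℝ)) ^ (-γ-(d:ℝ)/2) * lam ^ (γ+(d:ℝ)/2) := by
  set D := (d:ℝ)
  have h32 : (0:ℝ) < 3 - 2*γ := by linarith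
  have hD2γ : (0:ℝ) < D + 2*γ := by linarith
  have h2γD : (0:ℝ) < 2*γ + D := by linarith
  have h3D : (0:ℝ) < 3 + D := by linarith
  have hL : (0:ℝ) < (2*γ/3) ^ γ * ((3-2*γ)/3) ^ ((3:ℝ)/2-γ) * ((3-2*γ)/(D+2*γ)*lam) ^ (γ-3/2)
      * ((3+D)/(D+2*γ)*lam) ^ ((3:ℝ)/2+D/2) := by positivity
  have hR : (0:ℝ) < 3 ^ (-(3/2) : ℝ) * (3+D) ^ ((3+D)/2) * (2*γ) ^ γ
      * (2*γ+D) ^ (-γ-D/2) * lam ^ (γ+D/2) := by positivity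
  rw [← Real.exp_log hL, ← Real.exp_log hR]
  congr 1
  simp (disch := positivity) only [Real.log_mul, Real.log_div, Real.log_rpow, ne_eq]
  ring

/-- Relation between the semiclassical constants at `3/2` and at `γ`. -/
lemma Lcl_ratio (d : ℕ) (γ : ℝ) (hγ0 : 0 < γ) :
    Lcl d (3/2) = (Real.Gamma (5 / 2) * Real.Gamma (γ + (d : ℝ) / 2 + 1) /
      (Real.Gamma ((5 + (d : ℝ)) / 2) * Real.Gamma (γ + 1))) * Lcl d γ := by
  unfold Lcl
  have h1 : Real.Gamma ((3:ℝ)/2 + 1) = Real.Gamma (5/2) := by norm_num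
  have h2 : Real.Gamma ((3:ℝ)/2 + (d:ℝ)/2 + 1) = Real.Gamma ((5 + (d:ℝ))/2) := by
    congr 1; ring
  have g1 : (0:ℝ) < Real.Gamma (5/2) := Real.Gamma_pos_of_pos (by norm_num)
  have g2 : (0:ℝ) < Real.Gamma ((5 + (d:ℝ))/2) := Real.Gamma_pos_of_pos (by positivity)
  have g3 : (0:ℝ) < Real.Gamma (γ + 1) := Real.Gamma_pos_of_pos (by linarith)
  have g4 : (0:ℝ) < Real.Gamma (γ + (d:ℝ)/2 + 1) := Real.Gamma_pos_of_pos (by positivity)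
  have hπ : (0:ℝ) < Real.pi ^ ((d:ℝ)/2) := Real.rpow_pos_of_pos Real.pi_pos _
  rw [h1, h2]
  field_simp

/-- eigenvalue form of Theorem 3.1: the order-3/2 semiclassical bound with
constant `L^cl(3/2) V` implies the order-γ bound with constant `ρ_{γ,d} L^cl(γ) V` for
`0 < γ < 3/2`. -/
theorem stmt_11 (d : ℕ) (hd : 2 ≤ d) (γ V : ℝ) (hγ0 : 0 < γ) (hγ : γ < 3 / 2) (hV : 0 ≤ V)
    {ι : Type*} [Countable ι] (E : ι → ℝ) (hE : ∀ j, 0 ≤ E j)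
    (h : ∀ lam : ℝ, 0 < lam →
      ∑' j, ENNReal.ofReal ((max (lam - E j) 0) ^ (3 / 2 : ℝ)) ≤
        ENNReal.ofReal (Lcl d (3 / 2) * V * lam ^ (3 / 2 + (d : ℝ) / 2))) :
    ∀ lam : ℝ, 0 < lam →
      ∑' j, ENNReal.ofReal ((max (lam - E j) 0) ^ γ) ≤
        ENNReal.ofReal (rhoConst d γ * Lcl d γ * V * lam ^ (γ + (d : ℝ) / 2)) := by
  intro lam hlam
  have hD : (0:ℝ) < (d:ℝ) := by
    have : 0 < d := by omega
    exact_mod_cast this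
  have h32 : (0:ℝ) < 3 - 2*γ := by linarith
  have hD2γ : (0:ℝ) < (d:ℝ) + 2*γ := by linarith
  have h3D : (0:ℝ) < 3 + (d:ℝ) := by linarith
  set μ : ℝ := (3-2*γ)/((d:ℝ)+2*γ)*lam with hμdef
  set lam' : ℝ := (3+(d:ℝ))/((d:ℝ)+2*γ)*lam with hlam'def
  have hμ : 0 < μ := by rw [hμdef]; positivity
  have hlam' : 0 < lam' := by rw [hlam'def]; positivity
  have hlam'eq : lam' = lam + μ := by
    rw [hlam'def, hμdef]
    field_simp
    ring
  set C : ℝ := (2*γ/3) ^ γ * ((3-2*γ)/3) ^ ((3:ℝ)/2-γ) * μ ^ (γ-3/2) with hCdef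
  have hC : 0 ≤ C := by rw [hCdef]; positivity
  have pointwise : ∀ j, ENNReal.ofReal ((max (lam - E j) 0) ^ γ) ≤
      ENNReal.ofReal (C * (max (lam' - E j) 0) ^ ((3:ℝ)/2)) := by
    intro j
    apply ENNReal.ofReal_le_ofReal
    rcases le_or_gt (lam - E j) 0 with hc | hc
    · rw [max_eq_right hc, Real.zero_rpow (ne_of_gt hγ0)]
      positivity
    · rw [max_eq_left hc.le]
      have hmax : max (lam' - E j) 0 = (lam - E j) + μ := by
        rw [max_eq_left (by rw [hlam'eq]; linarith)]
        rw [hlam'eq]; ring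
      rw [hmax, hCdef]
      exact ptwise γ hγ0 hγ hc.le hμ
  have key : C * (Lcl d (3/2) * V * lam' ^ ((3:ℝ)/2 + (d:ℝ)/2))
      = rhoConst d γ * Lcl d γ * V * lam ^ (γ + (d:ℝ)/2) := by
    rw [Lcl_ratio d γ hγ0]
    have hkey := consts d γ lam hD hγ0 hγ hlam
    rw [← hμdef, ← hlam'def] at hkey
    calc C * ((Real.Gamma (5 / 2) * Real.Gamma (γ + (d : ℝ) / 2 + 1) /
          (Real.Gamma ((5 + (d : ℝ)) / 2) * Real.Gamma (γ + 1))) * Lcl d γ * V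
            * lam' ^ ((3:ℝ)/2 + (d:ℝ)/2))
        = (C * lam' ^ ((3:ℝ)/2 + (d:ℝ)/2)) *
            ((Real.Gamma (5 / 2) * Real.Gamma (γ + (d : ℝ) / 2 + 1) /
              (Real.Gamma ((5 + (d : ℝ)) / 2) * Real.Gamma (γ + 1))) * Lcl d γ * V) := by
          ring
      _ = (3 ^ (-(3/2) : ℝ) * (3+(d:ℝ)) ^ ((3+(d:ℝ))/2) * (2*γ) ^ γ
            * (2*γ+(d:ℝ)) ^ (-γ-(d:ℝ)/2) * lam ^ (γ+(d:ℝ)/2)) *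
            ((Real.Gamma (5 / 2) * Real.Gamma (γ + (d : ℝ) / 2 + 1) /
              (Real.Gamma ((5 + (d : ℝ)) / 2) * Real.Gamma (γ + 1))) * Lcl d γ * V) := by
          rw [hCdef, hkey]
      _ = rhoConst d γ * Lcl d γ * V * lam ^ (γ + (d:ℝ)/2) := by
          rw [rhoConst]; ring
  calc ∑' j, ENNReal.ofReal ((max (lam - E j) 0) ^ γ)
      ≤ ∑' j, ENNReal.ofReal (C * (max (lam' - E j) 0) ^ ((3:ℝ)/2)) :=
        ENNReal.tsum_le_tsum pointwise
    _ = ENNReal.ofReal C * ∑' j, ENNReal.ofReal ((max (lam' - E j) 0) ^ ((3:ℝ)/2)) := by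
        simp_rw [ENNReal.ofReal_mul hC]
        rw [ENNReal.tsum_mul_left]
    _ ≤ ENNReal.ofReal C * ENNReal.ofReal (Lcl d (3/2) * V * lam' ^ ((3:ℝ)/2 + (d:ℝ)/2)) := by
        exact mul_le_mul_right (h lam' hlam') _
    _ = ENNReal.ofReal (C * (Lcl d (3/2) * V * lam' ^ ((3:ℝ)/2 + (d:ℝ)/2))) :=
        (ENNReal.ofReal_mul hC).symm
    _ ≤ ENNReal.ofReal (rhoConst d γ * Lcl d γ * V * lam ^ (γ + (d : ℝ) / 2)) := by
        rw [key]
end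

section
/- Let B > 0 and let φ : ℝ → ℝ be a function that is convex on [0,∞), nonnegative on [0,∞), and Lebesgue integrable on (0,∞). Then the series ∑_{k=1}^∞ φ((2k-1)·B) converges and ∑_{k=1}^∞ φ((2k-1)·B) ≤ (1/(2B))·∫_0^∞ φ(λ) dλ. -/
open MeasureTheory

lemma mid_le_aux (B : ℝ) (hB : 0 < B) (φ : ℝ → ℝ)
    (hconv : ConvexOn ℝ (Set.Ici (0:ℝ)) φ)
    (m : ℝ) (hm : B ≤ m)
    (hI : IntervalIntegrable φ volume (m - B) (m + B)) :
    2 * B * φ m ≤ ∫ x in (m - B)..(m + B), φ x := by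
  have hIoc : IntegrableOn φ (Set.Ioc (m - B) (m + B)) :=
    (intervalIntegrable_iff_integrableOn_Ioc_of_le (by linarith)).mp hI
  have hI1 : IntervalIntegrable φ volume (m - B) m :=
    (intervalIntegrable_iff_integrableOn_Ioc_of_le (by linarith)).mpr
      (hIoc.mono_set (Set.Ioc_subset_Ioc le_rfl (by linarith)))
  have hI2 : IntervalIntegrable φ volume m (m + B) :=
    (intervalIntegrable_iff_integrableOn_Ioc_of_le (by linarith)).mpr
      (hIoc.mono_set (Set.Ioc_subset_Ioc (by linarith) le_rfl))
  have hg1 : IntervalIntegrable (fun t => φ (m - t)) volume 0 B := by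
    have := (hI1.comp_sub_left m).symm
    simpa using this
  have hg2 : IntervalIntegrable (fun t => φ (m + t)) volume 0 B := by
    have := hI2.comp_add_left m
    simpa using this
  have key : ∫ t in (0:ℝ)..B, (2 * φ m) ≤ ∫ t in (0:ℝ)..B, (φ (m - t) + φ (m + t)) := by
    apply intervalIntegral.integral_mono_on hB.le intervalIntegrable_const (hg1.add hg2)
    intro t ht
    obtain ⟨ht0, htB⟩ := ht
    have h1 : m - t ∈ Set.Ici (0:ℝ) := by simp; linarith
    have h2 : m + t ∈ Set.Ici (0:ℝ) := by simp; linarith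
    have := hconv.2 h1 h2 (by norm_num : (0:ℝ) ≤ 1/2) (by norm_num : (0:ℝ) ≤ 1/2) (by norm_num)
    have hmid : (1/2 : ℝ) • (m - t) + (1/2 : ℝ) • (m + t) = m := by
      simp [smul_eq_mul]; ring
    rw [hmid] at this
    simp only [smul_eq_mul] at this
    linarith
  have e0 : ∫ t in (0:ℝ)..B, (2 * φ m) = 2 * B * φ m := by
    simp [mul_comm, mul_assoc]
  have e1 : ∫ t in (0:ℝ)..B, φ (m - t) = ∫ x in (m - B)..m, φ x := by
    simpa using intervalIntegral.integral_comp_sub_left φ m (a := (0:ℝ)) (b := B)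
  have e2 : ∫ t in (0:ℝ)..B, φ (m + t) = ∫ x in m..(m + B), φ x := by
    simpa using intervalIntegral.integral_comp_add_left φ m (a := (0:ℝ)) (b := B)
  have eadd : ∫ t in (0:ℝ)..B, (φ (m - t) + φ (m + t))
      = (∫ x in (m - B)..m, φ x) + ∫ x in m..(m + B), φ x := by
    rw [intervalIntegral.integral_add hg1 hg2, e1, e2]
  rw [e0, eadd] at key
  rw [← intervalIntegral.integral_add_adjacent_intervals hI1 hI2]
  exact key

/-- for a nonnegative convex integrable function `φ` on `[0,∞)`, the sum over
Landau levels `(2k-1)B`, `k ≥ 1`, converges and is at most `(1/(2B)) ∫_0^∞ φ(λ) dλ`. -/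
theorem stmt_13 (B : ℝ) (hB : 0 < B) (φ : ℝ → ℝ)
    (hconv : ConvexOn ℝ (Set.Ici (0:ℝ)) φ)
    (hnonneg : ∀ x : ℝ, 0 ≤ x → 0 ≤ φ x)
    (hint : IntegrableOn φ (Set.Ioi (0:ℝ))) :
    Summable (fun k : ℕ => φ ((2 * (k : ℝ) + 1) * B)) ∧
      ∑' k : ℕ, φ ((2 * (k : ℝ) + 1) * B) ≤ (1 / (2 * B)) * ∫ lam in Set.Ioi (0:ℝ), φ lam := by
  set a : ℕ → ℝ := fun k => 2 * (k : ℝ) * B with ha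
  have haI : ∀ k : ℕ, IntervalIntegrable φ volume (a k) (a (k + 1)) := by
    intro k
    rw [intervalIntegrable_iff_integrableOn_Ioc_of_le (by simp [ha]; nlinarith [hB.le, (Nat.cast_nonneg k : (0:ℝ) ≤ k)])]
    exact hint.mono_set (fun x hx => lt_of_le_of_lt (by positivity) hx.1)
  have hfnn : ∀ k : ℕ, 0 ≤ φ ((2 * (k : ℝ) + 1) * B) := fun k =>
    hnonneg _ (by positivity)
  have hterm : ∀ k : ℕ, φ ((2 * (k : ℝ) + 1) * B)
      ≤ (1 / (2 * B)) * ∫ x in (a k)..(a (k + 1)), φ x := by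
    intro k
    set m : ℝ := (2 * (k : ℝ) + 1) * B with hmdef
    have hmB : m - B = a k := by simp [ha, hmdef]; ring
    have hmB' : m + B = a (k + 1) := by simp [ha, hmdef]; push_cast; ring
    have hI : IntervalIntegrable φ volume (m - B) (m + B) := by
      rw [hmB, hmB']; exact haI k
    have := mid_le_aux B hB φ hconv m (by nlinarith [(Nat.cast_nonneg k : (0:ℝ) ≤ k)]) hI
    rw [hmB, hmB'] at this
    have h2B : (0:ℝ) < 2 * B := by linarith
    rw [one_div, inv_mul_eq_div, le_div_iff₀ h2B]
    linarith
  have hpartial : ∀ n : ℕ, ∑ k ∈ Finset.range n, φ ((2 * (k : ℝ) + 1) * B)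
      ≤ (1 / (2 * B)) * ∫ lam in Set.Ioi (0:ℝ), φ lam := by
    intro n
    have h1 : ∑ k ∈ Finset.range n, φ ((2 * (k : ℝ) + 1) * B)
        ≤ ∑ k ∈ Finset.range n, (1 / (2 * B)) * ∫ x in (a k)..(a (k + 1)), φ x :=
      Finset.sum_le_sum fun k _ => hterm k
    rw [← Finset.mul_sum] at h1
    have h2 : ∑ k ∈ Finset.range n, ∫ x in (a k)..(a (k + 1)), φ x
        = ∫ x in (a 0)..(a n), φ x :=
      intervalIntegral.sum_integral_adjacent_intervals fun k _ => haI k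
    have ha0 : a 0 = 0 := by simp [ha]
    have h3 : ∫ x in (a 0)..(a n), φ x ≤ ∫ lam in Set.Ioi (0:ℝ), φ lam := by
      rw [ha0, intervalIntegral.integral_of_le (by simp [ha]; positivity)]
      apply setIntegral_mono_set hint
      · filter_upwards [ae_restrict_mem measurableSet_Ioi] with x hx
        exact hnonneg x (le_of_lt hx)
      · exact Filter.Eventually.of_forall fun x hx => hx.1
    have hc : (0:ℝ) ≤ 1 / (2 * B) := by positivity
    calc ∑ k ∈ Finset.range n, φ ((2 * (k : ℝ) + 1) * B)
        ≤ (1 / (2 * B)) * ∑ k ∈ Finset.range n, ∫ x in (a k)..(a (k + 1)), φ x := h1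
      _ = (1 / (2 * B)) * ∫ x in (a 0)..(a n), φ x := by rw [h2]
      _ ≤ (1 / (2 * B)) * ∫ lam in Set.Ioi (0:ℝ), φ lam := by
          exact mul_le_mul_of_nonneg_left h3 hc
  exact ⟨summable_of_sum_range_le hfnn hpartial,
    Real.tsum_le_of_sum_range_le hfnn hpartial⟩
end

section
/- Let γ ≥ 1 and B > 0 be real numbers. Then for every λ ≥ 0 one has ∑_{k=1}^∞ ((λ - (2k-1)·B)_+)^γ ≤ λ^{γ+1}/(2·B·(γ+1)). -/
open Real MeasureTheory intervalIntegral Set Filter Asymptotics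

noncomputable def gfun (γ s : ℝ) : ℝ := (max s 0) ^ γ

noncomputable def Hfun (γ s : ℝ) : ℝ := (max s 0) ^ (γ + 1) / (γ + 1)

lemma gfun_cont (γ : ℝ) (hγ : 1 ≤ γ) : Continuous (gfun γ) :=
  (Real.continuous_rpow_const (by linarith)).comp (continuous_id.max continuous_const)

lemma gfun_nonneg (γ s : ℝ) : 0 ≤ gfun γ s := Real.rpow_nonneg (le_max_right _ _) _

lemma gfun_convex (γ : ℝ) (hγ : 1 ≤ γ) : ConvexOn ℝ Set.univ (gfun γ) := by
  refine ⟨convex_univ, fun x _ y _ a b ha hb hab => ?_⟩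
  have h1 : max (a • x + b • y) 0 ≤ a * max x 0 + b * max y 0 := by
    refine max_le ?_ (by positivity)
    simp only [smul_eq_mul]
    gcongr <;> [exact le_max_left _ _; exact le_max_left _ _]
  calc gfun γ (a • x + b • y) ≤ (a * max x 0 + b * max y 0) ^ γ :=
        Real.rpow_le_rpow (le_max_right _ _) h1 (by linarith)
    _ ≤ a * (max x 0) ^ γ + b * (max y 0) ^ γ := by
        have := (convexOn_rpow hγ).2 (mem_Ici.2 (le_max_right x 0))
          (mem_Ici.2 (le_max_right y 0)) ha hb hab
        simpa using this
    _ = a • gfun γ x + b • gfun γ y := by simp [gfun]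

lemma Hfun_deriv (γ : ℝ) (hγ : 1 ≤ γ) (s : ℝ) :
    HasDerivAt (Hfun γ) (gfun γ s) s := by
  show HasDerivAt (Hfun γ) ((max s 0) ^ γ) s
  have hp : (0:ℝ) < γ + 1 := by linarith
  have hγ0 : γ ≠ 0 := by linarith
  rcases lt_trichotomy s 0 with hs | rfl | hs
  · have hev : Hfun γ =ᶠ[nhds s] fun _ => (0:ℝ) := by
      filter_upwards [eventually_lt_nhds hs] with x hx
      simp [Hfun, max_eq_right hx.le, Real.zero_rpow hp.ne']
    have h2 := (hasDerivAt_const s (0:ℝ)).congr_of_eventuallyEq hev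
    simpa [max_eq_right hs.le, Real.zero_rpow hγ0] using h2
  · -- s = 0
    rw [hasDerivAt_iff_isLittleO]
    simp only [max_self, Real.zero_rpow hγ0, sub_zero, smul_zero,
      Real.zero_rpow hp.ne', Hfun, zero_div]
    have h1 : (fun x : ℝ => |x| ^ γ * |x| / (γ + 1)) =o[nhds 0] fun x : ℝ => x := by
      rw [isLittleO_iff]
      intro c hc
      have ht : Tendsto (fun x : ℝ => |x| ^ γ) (nhds 0) (nhds 0) := by
        have h := ((Real.continuous_rpow_const (q := γ) (by linarith)).comp
          continuous_abs).tendsto 0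
        simpa [Function.comp_def, abs_zero, Real.zero_rpow hγ0] using h
      filter_upwards [ht.eventually_le_const hc] with x hx
      have hd : |x| ^ γ * |x| / (γ + 1) ≤ |x| ^ γ * |x| := by
        apply div_le_self (by positivity) (by linarith)
      have : |x| ^ γ * |x| ≤ c * |x| :=
        mul_le_mul_of_nonneg_right hx (abs_nonneg x)
      have habs : |(|x| ^ γ * |x| / (γ + 1))| = |x| ^ γ * |x| / (γ + 1) :=
        abs_of_nonneg (by positivity)
      rw [Real.norm_eq_abs, Real.norm_eq_abs, habs]
      linarith
    refine IsBigO.trans_isLittleO (isBigO_of_le _ fun x => ?_) h1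
    rw [Real.norm_eq_abs, Real.norm_eq_abs]
    rcases eq_or_ne x 0 with rfl | hx
    · simp [Real.zero_rpow hp.ne']
    · have h2 : (max x 0) ^ (γ + 1) ≤ |x| ^ (γ + 1) :=
        Real.rpow_le_rpow (le_max_right _ _) (max_le (le_abs_self x) (abs_nonneg x)) hp.le
      have h3 : |x| ^ (γ + 1) = |x| ^ γ * |x| := by
        rw [Real.rpow_add_one (abs_ne_zero.2 hx) γ]
      have hr : (0:ℝ) ≤ (max x 0) ^ (γ + 1) / (γ + 1) := by positivity
      rw [abs_of_nonneg hr]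
      have : (max x 0) ^ (γ + 1) / (γ + 1) ≤ |x| ^ γ * |x| / (γ + 1) := by
        rw [← h3]; gcongr
      exact this.trans (le_abs_self _)
  · have hev : Hfun γ =ᶠ[nhds s] fun x => x ^ (γ + 1) / (γ + 1) := by
      filter_upwards [eventually_gt_nhds hs] with x hx
      simp [Hfun, max_eq_left hx.le]
    have h1 : HasDerivAt (fun x : ℝ => x ^ (γ + 1) / (γ + 1))
        ((γ + 1) * s ^ (γ + 1 - 1) / (γ + 1)) s :=
      (Real.hasDerivAt_rpow_const (Or.inl hs.ne')).div_const _
    have h2 := h1.congr_of_eventuallyEq hev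
    have he : (γ + 1) * s ^ (γ + 1 - 1) / (γ + 1) = s ^ γ := by
      rw [mul_div_assoc, mul_comm]
      simp [hp.ne']
    rw [he] at h2
    simpa [max_eq_left hs.le] using h2

lemma integral_gfun (γ : ℝ) (hγ : 1 ≤ γ) (a b : ℝ) :
    ∫ s in a..b, gfun γ s = Hfun γ b - Hfun γ a :=
  intervalIntegral.integral_eq_sub_of_hasDerivAt (fun s _ => Hfun_deriv γ hγ s)
    ((gfun_cont γ hγ).intervalIntegrable a b)

lemma key_ineq_s14 (γ B : ℝ) (hγ : 1 ≤ γ) (hB : 0 < B) (m : ℝ) :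
    2 * B * gfun γ m ≤ Hfun γ (m + B) - Hfun γ (m - B) := by
  rw [← integral_gfun γ hγ]
  have hab : m - B ≤ m + B := by linarith
  have hcont : Continuous fun s => gfun γ (2 * m - s) :=
    (gfun_cont γ hγ).comp (continuous_const.sub continuous_id)
  have hrefl : ∫ s in (m - B)..(m + B), gfun γ (2 * m - s)
      = ∫ s in (m - B)..(m + B), gfun γ s := by
    rw [intervalIntegral.integral_comp_sub_left (gfun γ) (2 * m)]
    have e1 : 2 * m - (m + B) = m - B := by ring
    have e2 : 2 * m - (m - B) = m + B := by ring
    rw [e1, e2]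
  have hpt : ∀ s, gfun γ m ≤ (gfun γ s + gfun γ (2 * m - s)) / 2 := by
    intro s
    have := (gfun_convex γ hγ).2 (Set.mem_univ s) (Set.mem_univ (2 * m - s))
      (by norm_num : (0:ℝ) ≤ 1/2) (by norm_num : (0:ℝ) ≤ 1/2) (by norm_num)
    have he : (1/2 : ℝ) • s + (1/2 : ℝ) • (2 * m - s) = m := by
      simp only [smul_eq_mul]; ring
    rw [he] at this
    simp only [smul_eq_mul] at this
    linarith
  have hint1 : IntervalIntegrable (fun _ => gfun γ m) volume (m - B) (m + B) :=
    intervalIntegrable_const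
  have hint2 : IntervalIntegrable (fun s => (gfun γ s + gfun γ (2 * m - s)) / 2)
      volume (m - B) (m + B) :=
    (((gfun_cont γ hγ).add hcont).div_const 2).intervalIntegrable _ _
  have hmono := intervalIntegral.integral_mono_on hab hint1 hint2 (fun s _ => hpt s)
  have hconst : ∫ _ in (m - B)..(m + B), gfun γ m = 2 * B * gfun γ m := by
    rw [intervalIntegral.integral_const]
    have : m + B - (m - B) = 2 * B := by ring
    rw [this]; simp [smul_eq_mul]
  have hsplit : ∫ s in (m - B)..(m + B), (gfun γ s + gfun γ (2 * m - s)) / 2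
      = ∫ s in (m - B)..(m + B), gfun γ s := by
    rw [intervalIntegral.integral_div, intervalIntegral.integral_add
      ((gfun_cont γ hγ).intervalIntegrable _ _) (hcont.intervalIntegrable _ _), hrefl]
    ring
  rw [hconst, hsplit] at hmono
  exact hmono

/-- for `γ ≥ 1`, `∑_{k≥1} ((λ-(2k-1)B)_+)^γ ≤ λ^{γ+1}/(2B(γ+1))`. -/
theorem stmt_14 (γ B : ℝ) (hγ : 1 ≤ γ) (hB : 0 < B) :
    ∀ lam : ℝ, 0 ≤ lam →
      ∑' k : ℕ, (max (lam - (2 * (k : ℝ) + 1) * B) 0) ^ γ ≤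
        lam ^ (γ + 1) / (2 * B * (γ + 1)) := by
  intro lam hlam
  have hp : (0:ℝ) < γ + 1 := by linarith
  set f : ℕ → ℝ := fun k => (max (lam - (2 * (k : ℝ) + 1) * B) 0) ^ γ with hf
  set A : ℕ → ℝ := fun k => Hfun γ (lam - 2 * k * B) with hA
  obtain ⟨N, hN⟩ : ∃ N : ℕ, lam ≤ 2 * N * B := by
    obtain ⟨N, hN⟩ := exists_nat_gt (lam / (2 * B))
    exact ⟨N, by rw [div_lt_iff₀ (by positivity)] at hN; linarith⟩
  have hzero : ∀ k ∉ Finset.range N, f k = 0 := by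
    intro k hk
    rw [Finset.mem_range, not_lt] at hk
    have hk' : (N : ℝ) ≤ k := Nat.cast_le.2 hk
    have : lam - (2 * (k : ℝ) + 1) * B ≤ 0 := by nlinarith
    simp [hf, max_eq_right this, Real.zero_rpow (by linarith : γ ≠ 0)]
  have hsum : Summable f := summable_of_ne_finset_zero hzero
  rw [tsum_eq_sum hzero]
  have hterm : ∀ k : ℕ, f k ≤ (A k - A (k + 1)) / (2 * B) := by
    intro k
    have hk := key_ineq_s14 γ B hγ hB (lam - (2 * (k : ℝ) + 1) * B)
    have e1 : lam - (2 * (k : ℝ) + 1) * B + B = lam - 2 * k * B := by ring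
    have e2 : lam - (2 * (k : ℝ) + 1) * B - B = lam - 2 * ((k : ℝ) + 1) * B := by ring
    rw [e1, e2] at hk
    have : f k = gfun γ (lam - (2 * (k : ℝ) + 1) * B) := rfl
    rw [this, le_div_iff₀ (by positivity)]
    have : A (k + 1) = Hfun γ (lam - 2 * ((k : ℝ) + 1) * B) := by
      simp [hA, Nat.cast_add]
    rw [this, hA]
    linarith
  calc ∑ k ∈ Finset.range N, f k ≤ ∑ k ∈ Finset.range N, (A k - A (k + 1)) / (2 * B) :=
        Finset.sum_le_sum fun k _ => hterm k
    _ = (∑ k ∈ Finset.range N, (A k - A (k + 1))) / (2 * B) := by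
        rw [Finset.sum_div]
    _ = (A 0 - A N) / (2 * B) := by rw [Finset.sum_range_sub' A N]
    _ ≤ lam ^ (γ + 1) / (2 * B * (γ + 1)) := by
        have h0 : A 0 = lam ^ (γ + 1) / (γ + 1) := by
          simp [hA, Hfun, max_eq_left hlam]
        have hN0 : A N = 0 := by
          have : lam - 2 * (N : ℝ) * B ≤ 0 := by linarith
          simp [hA, Hfun, max_eq_right this, Real.zero_rpow hp.ne']
        rw [h0, hN0, sub_zero, div_div]
        rw [mul_comm (γ + 1) (2 * B)]
end

section
/- Let 0 < γ < 1 and B > 0 be real numbers. Then: (i) for every λ > 0, ∑_{k=1}^∞ ((λ - (2k-1)·B)_+)^γ ≤ (γ/(γ+1))^γ · λ^{γ+1}/(B·(γ+1)); and (ii) equality holds for λ = B·(γ+1), where both sides equal (B·γ)^γ. -/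
open Real Set

/-- midpoint convexity consequence for negative exponents. -/
lemma midconv (q a b x : ℝ) (hq : q ≤ 0) (ha : 0 < a) (hb : 0 < b) (hx : 0 < x)
    (hab : a * b ≤ x * x) : 2 * x ^ q ≤ a ^ q + b ^ q := by
  have h1 : a ^ q + b ^ q ≥ 2 * Real.sqrt (a ^ q * b ^ q) := by
    nlinarith [sq_nonneg (Real.sqrt (a ^ q) - Real.sqrt (b ^ q)),
      Real.sq_sqrt (Real.rpow_nonneg ha.le q), Real.sq_sqrt (Real.rpow_nonneg hb.le q),
      Real.sqrt_mul_self (Real.rpow_nonneg ha.le q),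
      Real.sqrt_mul (Real.rpow_nonneg ha.le q) (b ^ q),
      Real.sqrt_nonneg (a^q), Real.sqrt_nonneg (b^q)]
  have h2 : Real.sqrt (a ^ q * b ^ q) = (a * b) ^ (q / 2) := by
    rw [← Real.mul_rpow ha.le hb.le, Real.sqrt_eq_rpow, ← Real.rpow_mul (by positivity)]
    ring_nf
  have h3 : x ^ q = (x * x) ^ (q / 2) := by
    rw [show x * x = x ^ (2:ℝ) by rw [Real.rpow_two]; ring, ← Real.rpow_mul hx.le]
    ring_nf
  have h4 : (x * x) ^ (q / 2) ≤ (a * b) ^ (q / 2) :=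
    Real.rpow_le_rpow_of_nonpos (by positivity) hab (by linarith)
  rw [h2] at h1
  rw [h3]
  linarith

/-- Weighted AM-GM consequence: `m^γ (γ+1)^(γ+1) ≤ γ^γ (m+1)^(γ+1)` for `m ≥ 0`. -/
lemma caseA (γ m : ℝ) (hγ0 : 0 < γ) (hγ1 : γ < 1) (hm : 0 ≤ m) :
    m ^ γ * (γ + 1) ^ (γ + 1) ≤ γ ^ γ * (m + 1) ^ (γ + 1) := by
  have hγ1' : (0:ℝ) < γ + 1 := by linarith
  have hg : γ / (γ + 1) + 1 / (γ + 1) = 1 := by field_simp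
  have h1 : (m / γ) ^ (γ / (γ + 1)) * (1:ℝ) ^ ((1:ℝ) / (γ + 1)) ≤
      (γ / (γ + 1)) * (m / γ) + (1 / (γ + 1)) * 1 :=
    Real.geom_mean_le_arith_mean2_weighted (by positivity) (by positivity)
      (by positivity) zero_le_one hg
  rw [Real.one_rpow, mul_one, mul_one] at h1
  have h1' : (m / γ) ^ (γ / (γ + 1)) ≤ (m + 1) / (γ + 1) := by
    refine h1.trans_eq ?_
    field_simp
  have h2 : ((m / γ) ^ (γ / (γ + 1))) ^ (γ + 1) ≤ ((m + 1) / (γ + 1)) ^ (γ + 1) :=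
    Real.rpow_le_rpow (by positivity) h1' hγ1'.le
  rw [← Real.rpow_mul (by positivity), div_mul_cancel₀ _ (by positivity : (γ:ℝ) + 1 ≠ 0)] at h2
  rw [Real.div_rpow hm hγ0.le, Real.div_rpow (by linarith) hγ1'.le] at h2
  have hγγ : (0:ℝ) < γ ^ γ := Real.rpow_pos_of_pos hγ0 _
  have hgg : (0:ℝ) < (γ + 1) ^ (γ + 1) := Real.rpow_pos_of_pos hγ1' _
  rw [div_le_div_iff₀ hγγ hgg] at h2
  linarith

/-- Bernoulli: `2^γ ≤ 1 + γ` for `0 ≤ γ ≤ 1`. -/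
lemma bern (γ : ℝ) (hγ0 : 0 ≤ γ) (hγ1 : γ ≤ 1) : (2:ℝ) ^ γ ≤ 1 + γ := by
  have h1 : (2:ℝ) ^ γ * (1:ℝ) ^ (1 - γ) ≤ γ * 2 + (1 - γ) * 1 :=
    Real.geom_mean_le_arith_mean2_weighted hγ0 (by linarith) (by norm_num) zero_le_one
      (by ring)
  rw [Real.one_rpow, mul_one] at h1
  linarith

/-- `(x+1)^γ - (x-1)^γ ≥ 2 γ x^(γ-1)` for `x > 1`, `0 < γ < 1`. -/
lemma c1a (γ x : ℝ) (hγ0 : 0 < γ) (hγ1 : γ < 1) (hx : 1 < x) :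
    2 * γ * x ^ (γ - 1) ≤ (x + 1) ^ γ - (x - 1) ^ γ := by
  set χ : ℝ → ℝ := fun h => (x + h) ^ γ - (x - h) ^ γ - 2 * γ * x ^ (γ - 1) * h with hχ
  have hder : ∀ h ∈ Icc (0:ℝ) 1, HasDerivAt χ
      (γ * (x + h) ^ (γ - 1) + γ * (x - h) ^ (γ - 1) - 2 * γ * x ^ (γ - 1)) h := by
    intro h hh
    obtain ⟨h0, h1⟩ := hh
    have hxp : (0:ℝ) < x + h := by linarith
    have hxm : (0:ℝ) < x - h := by linarith
    have d1 : HasDerivAt (fun h : ℝ => (x + h) ^ γ) (1 * γ * (x + h) ^ (γ - 1)) h :=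
      (HasDerivAt.const_add x (hasDerivAt_id h)).rpow_const (Or.inl hxp.ne')
    have d2 : HasDerivAt (fun h : ℝ => (x - h) ^ γ) ((-1) * γ * (x - h) ^ (γ - 1)) h := by
      have : HasDerivAt (fun h : ℝ => x - h) (-1) h := by
        simpa using (hasDerivAt_id h).const_sub x
      exact this.rpow_const (Or.inl hxm.ne')
    have d3 : HasDerivAt (fun h : ℝ => 2 * γ * x ^ (γ - 1) * h)
        (2 * γ * x ^ (γ - 1)) h := by
      simpa using (hasDerivAt_id h).const_mul (2 * γ * x ^ (γ - 1))
    have := (d1.sub d2).sub d3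
    exact this.congr_deriv (by ring)
  have hmono : MonotoneOn χ (Icc (0:ℝ) 1) := by
    apply monotoneOn_of_deriv_nonneg (convex_Icc _ _)
    · exact fun h hh => ((hder h hh).differentiableAt.continuousAt).continuousWithinAt
    · rw [interior_Icc]
      intro h hh
      exact ((hder h (Ioo_subset_Icc_self hh)).differentiableAt).differentiableWithinAt
    · rw [interior_Icc]
      intro h hh
      rw [(hder h (Ioo_subset_Icc_self hh)).deriv]
      have hxm : (0:ℝ) < x - h := by linarith [hh.2]
      have hxp : (0:ℝ) < x + h := by linarith [hh.1]
      have key := midconv (γ - 1) (x + h) (x - h) x (by linarith) hxp hxm (by linarith)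
        (by nlinarith [sq_nonneg h])
      nlinarith [key, hγ0]
  have h01 : (0:ℝ) ∈ Icc (0:ℝ) 1 := by constructor <;> norm_num
  have h11 : (1:ℝ) ∈ Icc (0:ℝ) 1 := by constructor <;> norm_num
  have hm := hmono h01 h11 zero_le_one
  simp only [hχ] at hm
  have e0 : (x + 0) ^ γ - (x - 0) ^ γ - 2 * γ * x ^ (γ - 1) * 0 = 0 := by simp
  rw [e0] at hm
  linarith [hm]

/-- `(m+1)^(γ+1) - (m-1)^(γ+1) ≥ 2^(γ+1) m^γ` for `m ≥ 1`. -/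
lemma c1 (γ m : ℝ) (hγ0 : 0 < γ) (hγ1 : γ < 1) (hm : 1 ≤ m) :
    2 ^ (γ + 1) * m ^ γ ≤ (m + 1) ^ (γ + 1) - (m - 1) ^ (γ + 1) := by
  set σ : ℝ → ℝ := fun t => (t + 1) ^ (γ + 1) - (t - 1) ^ (γ + 1) - 2 ^ (γ + 1) * t ^ γ
    with hσ
  have hder : ∀ t ∈ Ioi (1:ℝ), HasDerivAt σ
      ((γ + 1) * (t + 1) ^ γ - (γ + 1) * (t - 1) ^ γ - 2 ^ (γ + 1) * (γ * t ^ (γ - 1))) t := by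
    intro t ht
    have ht' : (1:ℝ) < t := ht
    have h1 : (0:ℝ) < t + 1 := by linarith
    have h2 : (0:ℝ) < t - 1 := by linarith
    have h3 : (0:ℝ) < t := by linarith
    have d1 : HasDerivAt (fun t : ℝ => (t + 1) ^ (γ + 1)) (1 * (γ + 1) * (t + 1) ^ (γ + 1 - 1)) t :=
      ((hasDerivAt_id t).add_const 1).rpow_const (Or.inl h1.ne')
    have d2 : HasDerivAt (fun t : ℝ => (t - 1) ^ (γ + 1)) (1 * (γ + 1) * (t - 1) ^ (γ + 1 - 1)) t :=
      ((hasDerivAt_id t).sub_const 1).rpow_const (Or.inl h2.ne')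
    have d3 : HasDerivAt (fun t : ℝ => t ^ γ) (1 * γ * t ^ (γ - 1)) t :=
      (hasDerivAt_id t).rpow_const (Or.inl h3.ne')
    have := (d1.sub d2).sub (d3.const_mul (2 ^ (γ + 1)))
    exact this.congr_deriv (by simp only [add_sub_cancel_right]; ring)
  have hcont : ContinuousOn σ (Ici (1:ℝ)) := by
    intro t ht
    have ht' : (1:ℝ) ≤ t := ht
    have c1' : ContinuousAt (fun t : ℝ => (t + 1) ^ (γ + 1)) t :=
      ContinuousAt.rpow_const ((continuous_id.add continuous_const).continuousAt)
        (Or.inr (by linarith))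
    have c2' : ContinuousAt (fun t : ℝ => (t - 1) ^ (γ + 1)) t :=
      ContinuousAt.rpow_const ((continuous_id.sub continuous_const).continuousAt)
        (Or.inr (by linarith))
    have c3' : ContinuousAt (fun t : ℝ => t ^ γ) t :=
      ContinuousAt.rpow_const continuousAt_id (Or.inl (by simp; positivity))
    exact (((c1'.sub c2').sub (c3'.const_mul _)).continuousWithinAt)
  have hmono : MonotoneOn σ (Ici (1:ℝ)) := by
    apply monotoneOn_of_deriv_nonneg (convex_Ici _) hcont
    · rw [interior_Ici]
      exact fun t ht => ((hder t ht).differentiableAt).differentiableWithinAt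
    · rw [interior_Ici]
      intro t ht
      rw [(hder t ht).deriv]
      have ht' : (1:ℝ) < t := ht
      have key := c1a γ t hγ0 hγ1 ht'
      have h2γ : (2:ℝ) ^ γ ≤ 1 + γ := bern γ hγ0.le hγ1.le
      have hpow : (2:ℝ) ^ (γ + 1) = 2 ^ γ * 2 := by
        rw [Real.rpow_add (by norm_num), Real.rpow_one]
      have htpos : (0:ℝ) < t ^ (γ - 1) := Real.rpow_pos_of_pos (by linarith) _
      rw [hpow]
      have k1 : (γ + 1) * (2 * γ * t ^ (γ - 1)) ≤ (γ + 1) * ((t + 1) ^ γ - (t - 1) ^ γ) :=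
        mul_le_mul_of_nonneg_left key (by linarith)
      have k2 : 2 ^ γ * (2 * γ * t ^ (γ - 1)) ≤ (1 + γ) * (2 * γ * t ^ (γ - 1)) :=
        mul_le_mul_of_nonneg_right h2γ (by positivity)
      nlinarith [k1, k2]
  have h1m : (1:ℝ) ∈ Ici (1:ℝ) := self_mem_Ici
  have hmm : m ∈ Ici (1:ℝ) := hm
  have hm2 := hmono h1m hmm hm
  have e1 : σ 1 = 0 := by
    simp only [hσ]
    norm_num [Real.zero_rpow (show γ + 1 ≠ 0 by positivity), Real.one_rpow]
  rw [e1] at hm2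
  simpa only [hσ, sub_nonneg] using hm2

/-- pointwise inequality, unit field strength -/
lemma mainB1 (γ v : ℝ) (hγ0 : 0 < γ) (hγ1 : γ < 1) :
    (max (v - 1) 0) ^ γ * (γ + 1) ^ (γ + 1) ≤
      γ ^ γ * ((max v 0) ^ (γ + 1) - (max (v - 2) 0) ^ (γ + 1)) := by
  have hγγ : (0:ℝ) ≤ γ ^ γ := (Real.rpow_pos_of_pos hγ0 _).le
  rcases le_or_gt v 1 with hv | hv
  · have hL : max (v - 1) 0 = 0 := max_eq_right (by linarith)
    rw [hL, Real.zero_rpow hγ0.ne', zero_mul]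
    have : (max (v - 2) 0) ^ (γ + 1) ≤ (max v 0) ^ (γ + 1) :=
      Real.rpow_le_rpow (le_max_right _ _) (max_le_max (by linarith) le_rfl) (by linarith)
    have := sub_nonneg.mpr this
    positivity
  · rcases le_or_gt v 2 with hv2 | hv2
    · have hL : max (v - 1) 0 = v - 1 := max_eq_left (by linarith)
      have hM : max v 0 = v := max_eq_left (by linarith)
      have hR : max (v - 2) 0 = 0 := max_eq_right (by linarith)
      rw [hL, hM, hR, Real.zero_rpow (by positivity), sub_zero]
      have := caseA γ (v - 1) hγ0 hγ1 (by linarith)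
      simpa [sub_add_cancel] using this
    · have hL : max (v - 1) 0 = v - 1 := max_eq_left (by linarith)
      have hM : max v 0 = v := max_eq_left (by linarith)
      have hR : max (v - 2) 0 = v - 2 := max_eq_left (by linarith)
      rw [hL, hM, hR]
      have hB2 : (γ + 1) ^ (γ + 1) ≤ γ ^ γ * 2 ^ (γ + 1) := by
        have := caseA γ 1 hγ0 hγ1 zero_le_one
        rw [Real.one_rpow, one_mul] at this
        norm_num at this ⊢
        exact this
      have hc1 := c1 γ (v - 1) hγ0 hγ1 (by linarith)
      have e1 : v - 1 + 1 = v := by ring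
      have e2 : v - 1 - 1 = v - 2 := by ring
      rw [e1, e2] at hc1
      have hvγ : (0:ℝ) ≤ (v - 1) ^ γ := Real.rpow_nonneg (by linarith) _
      calc (v - 1) ^ γ * (γ + 1) ^ (γ + 1) ≤ (v - 1) ^ γ * (γ ^ γ * 2 ^ (γ + 1)) :=
            mul_le_mul_of_nonneg_left hB2 hvγ
        _ = γ ^ γ * (2 ^ (γ + 1) * (v - 1) ^ γ) := by ring
        _ ≤ γ ^ γ * (v ^ (γ + 1) - (v - 2) ^ (γ + 1)) :=
            mul_le_mul_of_nonneg_left hc1 hγγ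

lemma term_le (γ B s : ℝ) (hγ0 : 0 < γ) (hγ1 : γ < 1) (hB : 0 < B) :
    (max (s - B) 0) ^ γ ≤ γ ^ γ / ((γ + 1) ^ (γ + 1) * B) *
      ((max s 0) ^ (γ + 1) - (max (s - 2 * B) 0) ^ (γ + 1)) := by
  have hγ1' : (0:ℝ) < γ + 1 := by linarith
  have hgg : (0:ℝ) < (γ + 1) ^ (γ + 1) := Real.rpow_pos_of_pos hγ1' _
  have hBγ : (0:ℝ) < B ^ γ := Real.rpow_pos_of_pos hB _
  set v := s / B with hv
  have f1 : s - B = B * (v - 1) := by rw [hv]; field_simp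
  have f2 : s = B * v := by rw [hv]; field_simp
  have f3 : s - 2 * B = B * (v - 2) := by rw [hv]; field_simp
  have e1 : max (s - B) 0 = B * max (v - 1) 0 := by
    rw [f1, mul_max_of_nonneg _ _ hB.le, mul_zero]
  have e2 : max s 0 = B * max v 0 := by
    rw [f2, mul_max_of_nonneg _ _ hB.le, mul_zero]
  have e3 : max (s - 2 * B) 0 = B * max (v - 2) 0 := by
    rw [f3, mul_max_of_nonneg _ _ hB.le, mul_zero]
  rw [e1, e2, e3,
    Real.mul_rpow hB.le (le_max_right _ _),
    Real.mul_rpow hB.le (le_max_right _ _),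
    Real.mul_rpow hB.le (le_max_right _ _)]
  have key := mainB1 γ v hγ0 hγ1
  have hBγ1 : B ^ (γ + 1) = B ^ γ * B := by
    rw [Real.rpow_add hB, Real.rpow_one]
  rw [hBγ1]
  have hfin : (max (v - 1) 0) ^ γ ≤
      γ ^ γ * ((max v 0) ^ (γ + 1) - (max (v - 2) 0) ^ (γ + 1)) / (γ + 1) ^ (γ + 1) :=
    (le_div_iff₀ hgg).mpr key
  calc B ^ γ * (max (v - 1) 0) ^ γ
      ≤ B ^ γ * (γ ^ γ * ((max v 0) ^ (γ + 1) - (max (v - 2) 0) ^ (γ + 1)) / (γ + 1) ^ (γ + 1)) :=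
        mul_le_mul_of_nonneg_left hfin hBγ.le
    _ = γ ^ γ / ((γ + 1) ^ (γ + 1) * B) *
        (B ^ γ * B * (max v 0) ^ (γ + 1) - B ^ γ * B * (max (v - 2) 0) ^ (γ + 1)) := by
        field_simp

/-- for `0 < γ < 1`,
`∑_{k≥1} ((λ-(2k-1)B)_+)^γ ≤ (γ/(γ+1))^γ λ^{γ+1}/(B(γ+1))` for all `λ > 0`, with equality
at `λ = B(γ+1)` where both sides equal `(Bγ)^γ`. -/
theorem stmt_15 (γ B : ℝ) (hγ0 : 0 < γ) (hγ1 : γ < 1) (hB : 0 < B) :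
    (∀ lam : ℝ, 0 < lam →
      ∑' k : ℕ, (max (lam - (2 * (k : ℝ) + 1) * B) 0) ^ γ ≤
        (γ / (γ + 1)) ^ γ * lam ^ (γ + 1) / (B * (γ + 1))) ∧
    (∑' k : ℕ, (max (B * (γ + 1) - (2 * (k : ℝ) + 1) * B) 0) ^ γ = (B * γ) ^ γ) ∧
    ((γ / (γ + 1)) ^ γ * (B * (γ + 1)) ^ (γ + 1) / (B * (γ + 1)) = (B * γ) ^ γ) := by
  have hγ1' : (0:ℝ) < γ + 1 := by linarith
  have hconst : (γ / (γ + 1)) ^ γ / (B * (γ + 1)) = γ ^ γ / ((γ + 1) ^ (γ + 1) * B) := by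
    rw [Real.div_rpow hγ0.le hγ1'.le, Real.rpow_add hγ1' γ 1, Real.rpow_one]
    have h1 : (0:ℝ) < (γ + 1) ^ γ := Real.rpow_pos_of_pos hγ1' _
    rw [div_div]
    congr 1
    ring
  refine ⟨?_, ?_, ?_⟩
  · -- part 1
    intro lam hlam
    set c := γ ^ γ / ((γ + 1) ^ (γ + 1) * B) with hc
    set a : ℕ → ℝ := fun k => (max (lam - (2 * (k : ℝ) + 1) * B) 0) ^ γ with ha
    set b : ℕ → ℝ := fun k => (max (lam - 2 * (k : ℝ) * B) 0) ^ (γ + 1) with hb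
    set N : ℕ := Nat.ceil (lam / B) with hN
    have hNB : lam ≤ (N : ℝ) * B := by
      have := Nat.le_ceil (lam / B)
      rw [← hN] at this
      calc lam = lam / B * B := by field_simp
        _ ≤ (N : ℝ) * B := by
          apply mul_le_mul_of_nonneg_right this hB.le
    have hzero : ∀ k ∉ Finset.range N, a k = 0 := by
      intro k hk
      rw [Finset.mem_range, not_lt] at hk
      have hk' : (N : ℝ) ≤ (k : ℝ) := by exact_mod_cast hk
      have : lam - (2 * (k : ℝ) + 1) * B ≤ 0 := by nlinarith
      simp only [ha]
      rw [max_eq_right this, Real.zero_rpow hγ0.ne']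
    rw [tsum_eq_sum hzero]
    have hterm : ∀ k ∈ Finset.range N, a k ≤ c * (b k - b (k + 1)) := by
      intro k _
      have htl := term_le γ B (lam - 2 * (k : ℝ) * B) hγ0 hγ1 hB
      simp only [ha, hb, hc]
      push_cast
      rw [show lam - (2 * (k : ℝ) + 1) * B = lam - 2 * (k : ℝ) * B - B by ring,
        show lam - 2 * ((k : ℝ) + 1) * B = lam - 2 * (k : ℝ) * B - 2 * B by ring]
      exact htl
    calc ∑ k ∈ Finset.range N, a k ≤ ∑ k ∈ Finset.range N, c * (b k - b (k + 1)) :=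
          Finset.sum_le_sum hterm
      _ = c * (b 0 - b N) := by rw [← Finset.mul_sum, Finset.sum_range_sub']
      _ = c * lam ^ (γ + 1) := by
          have hb0 : b 0 = lam ^ (γ + 1) := by
            simp only [hb]
            norm_num
            rw [max_eq_left hlam.le]
          have hbN : b N = 0 := by
            simp only [hb]
            rw [max_eq_right (by nlinarith), Real.zero_rpow (by positivity)]
          rw [hb0, hbN, sub_zero]
      _ = (γ / (γ + 1)) ^ γ * lam ^ (γ + 1) / (B * (γ + 1)) := by
          rw [show c = (γ / (γ + 1)) ^ γ / (B * (γ + 1)) from hconst.symm]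
          ring
  · -- part 2
    rw [tsum_eq_single 0]
    · norm_num
      rw [show B * (γ + 1) - B = B * γ by ring, max_eq_left (by positivity)]
    · intro k hk
      have hk1 : 1 ≤ k := Nat.one_le_iff_ne_zero.mpr hk
      have hk1' : (1:ℝ) ≤ (k : ℝ) := by exact_mod_cast hk1
      have : B * (γ + 1) - (2 * (k : ℝ) + 1) * B ≤ 0 := by nlinarith
      rw [max_eq_right this, Real.zero_rpow hγ0.ne']
  · -- part 3
    have hBγ1 : (0:ℝ) < B * (γ + 1) := by positivity
    rw [Real.rpow_add hBγ1 γ 1, Real.rpow_one]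
    rw [show (γ / (γ + 1)) ^ γ * ((B * (γ + 1)) ^ γ * (B * (γ + 1))) / (B * (γ + 1)) =
        (γ / (γ + 1)) ^ γ * (B * (γ + 1)) ^ γ by field_simp]
    rw [← Real.mul_rpow (by positivity) hBγ1.le]
    congr 1
    field_simp
end

section
/- Let ι be a countable index set, E : ι → ℝ a family of real numbers, and let a ∈ ℝ, p ≥ 0, c ≥ 0 and γ > 1 be real numbers. Assume that for every λ ∈ ℝ one has ∑'_{j∈ι} (λ - E_j)_+ ≥ c·((λ-a)_+)^{1+p} (sums taken in [0,∞]). Then for every λ ∈ ℝ one has ∑'_{j∈ι} ((λ - E_j)_+)^γ ≥ c·(Γ(p+2)·Γ(γ+1)/Γ(γ+p+1))·((λ-a)_+)^{γ+p}. -/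
open MeasureTheory Set

lemma realBetaScaled (s q : ℝ) (hs : 0 < s) (hq : 0 < q) {x : ℝ} (hx : 0 < x) :
    ∫ t in (0:ℝ)..x, t ^ (s-1) * (x - t) ^ (q-1) =
      Real.Gamma s * Real.Gamma q / Real.Gamma (s+q) * x ^ (s+q-1) := by
  have hG : (0:ℝ) < Real.Gamma (s+q) := Real.Gamma_pos_of_pos (by linarith)
  have h1 : (∫ t in (0:ℝ)..x, (t:ℂ) ^ ((s:ℂ)-1) * ((x:ℂ) - t) ^ ((q:ℂ)-1)) =
      (x:ℂ) ^ ((s:ℂ)+q-1) * Complex.betaIntegral s q := Complex.betaIntegral_scaled s q hx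
  have h2 : (∫ t in (0:ℝ)..x, (t:ℂ) ^ ((s:ℂ)-1) * ((x:ℂ) - t) ^ ((q:ℂ)-1)) =
      ((∫ t in (0:ℝ)..x, t ^ (s-1) * (x - t) ^ (q-1) : ℝ) : ℂ) := by
    rw [← intervalIntegral.integral_ofReal]
    refine intervalIntegral.integral_congr (fun t ht => ?_)
    rw [Set.uIcc_of_le hx.le] at ht
    rw [Complex.ofReal_mul, Complex.ofReal_cpow ht.1 (s-1),
      Complex.ofReal_cpow (by linarith [ht.2] : (0:ℝ) ≤ x - t) (q-1)]
    push_cast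
    ring
  have hbeta : Complex.betaIntegral s q =
      ((Real.Gamma s * Real.Gamma q / Real.Gamma (s+q) : ℝ) : ℂ) := by
    have := Complex.Gamma_mul_Gamma_eq_betaIntegral (s := (s:ℂ)) (t := (q:ℂ))
      (by simpa using hs) (by simpa using hq)
    have hGc : Complex.Gamma ((s:ℂ)+q) ≠ 0 := by
      rw [show ((s:ℂ)+q) = ((s+q : ℝ) : ℂ) by push_cast; ring, Complex.Gamma_ofReal]
      exact_mod_cast hG.ne'
    have hb : Complex.betaIntegral s q =
        Complex.Gamma s * Complex.Gamma q / Complex.Gamma ((s:ℂ)+q) := by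
      rw [eq_div_iff hGc, this]; ring
    rw [hb, show ((s:ℂ)+q) = ((s+q : ℝ) : ℂ) by push_cast; ring,
      Complex.Gamma_ofReal, Complex.Gamma_ofReal, Complex.Gamma_ofReal]
    push_cast
    ring
  have h3 : ((x:ℂ)) ^ ((s:ℂ)+q-1) = ((x ^ (s+q-1) : ℝ) : ℂ) := by
    rw [Complex.ofReal_cpow hx.le]
    push_cast
    ring_nf
  apply Complex.ofReal_injective
  rw [← h2, h1, hbeta, h3]
  push_cast
  ring

lemma keyIntegrable (s q x : ℝ) (hs : 0 < s) (hq : 0 ≤ q) (hx : 0 < x) :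
    IntegrableOn (fun t => t ^ (s-1) * (x - t) ^ q) (Set.Ioc 0 x) := by
  have hg : IntegrableOn (fun t : ℝ => t ^ (s-1) * x ^ q) (Set.Ioc 0 x) := by
    have := (intervalIntegral.intervalIntegrable_rpow' (a := 0) (b := x)
      (r := s-1) (by linarith)).mul_const (x ^ q)
    rwa [intervalIntegrable_iff_integrableOn_Ioc_of_le hx.le] at this
  refine hg.mono' ?_ ?_
  · exact Measurable.aestronglyMeasurable (by fun_prop)
  · rw [ae_restrict_iff' measurableSet_Ioc]
    filter_upwards with t ht
    have h1 : (0:ℝ) ≤ t ^ (s-1) := Real.rpow_nonneg ht.1.le _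
    have h2 : (0:ℝ) ≤ (x - t) ^ q := Real.rpow_nonneg (by linarith [ht.2]) _
    rw [Real.norm_eq_abs, abs_of_nonneg (mul_nonneg h1 h2)]
    exact mul_le_mul_of_nonneg_left
      (Real.rpow_le_rpow (by linarith [ht.2]) (by linarith [ht.1]) hq) h1

lemma keyLintegral (s q : ℝ) (hs : 0 < s) (hq : 0 < q) (x : ℝ) :
    ∫⁻ t in Set.Ioi (0:ℝ), ENNReal.ofReal (t ^ (s-1) * (max (x - t) 0) ^ q) =
      ENNReal.ofReal (Real.Gamma s * Real.Gamma (q+1) / Real.Gamma (s+q+1)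
        * (max x 0) ^ (s+q)) := by
  rcases le_or_gt x 0 with hx | hx
  · have : ∀ t ∈ Set.Ioi (0:ℝ),
        ENNReal.ofReal (t ^ (s-1) * (max (x - t) 0) ^ q) = 0 := by
      intro t ht
      rw [max_eq_right (by simp only [Set.mem_Ioi] at ht; linarith),
        Real.zero_rpow hq.ne', mul_zero, ENNReal.ofReal_zero]
    rw [setLIntegral_congr_fun measurableSet_Ioi this,
      lintegral_zero, max_eq_right hx, Real.zero_rpow (by linarith : s+q ≠ 0),
      mul_zero, ENNReal.ofReal_zero]
  · have hsplit : Set.Ioi (0:ℝ) = Set.Ioc 0 x ∪ Set.Ioi x :=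
      (Set.Ioc_union_Ioi_eq_Ioi hx.le).symm
    rw [hsplit, lintegral_union measurableSet_Ioi Set.Ioc_disjoint_Ioi_same]
    have h2 : ∫⁻ t in Set.Ioi x, ENNReal.ofReal (t ^ (s-1) * (max (x - t) 0) ^ q) = 0 := by
      rw [setLIntegral_congr_fun measurableSet_Ioi
        (fun ⦃t⦄ ht => ?_), lintegral_zero]
      simp only [Set.mem_Ioi] at ht
      rw [max_eq_right (by linarith), Real.zero_rpow hq.ne', mul_zero, ENNReal.ofReal_zero]
    rw [h2, add_zero]
    have h1 : ∫⁻ t in Set.Ioc 0 x, ENNReal.ofReal (t ^ (s-1) * (max (x - t) 0) ^ q) =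
        ∫⁻ t in Set.Ioc 0 x, ENNReal.ofReal (t ^ (s-1) * (x - t) ^ q) := by
      refine setLIntegral_congr_fun measurableSet_Ioc
        (fun ⦃t⦄ ht => ?_)
      rw [max_eq_left (by linarith [ht.2])]
    rw [h1, ← ofReal_integral_eq_lintegral_ofReal (keyIntegrable s q x hs hq.le hx)]
    · rw [← intervalIntegral.integral_of_le hx.le]
      have := realBetaScaled s (q+1) hs (by linarith) hx
      simp only [add_sub_cancel_right] at this
      rw [show s + (q+1) = s + q + 1 by ring, show s + q + 1 - 1 = s + q by ring] at this
      rw [this, max_eq_left hx.le]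
    · filter_upwards [ae_restrict_mem measurableSet_Ioc] with t ht
      exact mul_nonneg (Real.rpow_nonneg ht.1.le _)
        (Real.rpow_nonneg (by linarith [ht.2]) _)

/-- Aizenman–Lieb upgrade of lower bounds: if
`∑ (λ-E_j)_+ ≥ c ((λ-a)_+)^{1+p}` for all `λ`, then for `γ > 1`
`∑ ((λ-E_j)_+)^γ ≥ c (Γ(p+2)Γ(γ+1)/Γ(γ+p+1)) ((λ-a)_+)^{γ+p}`. -/
theorem stmt_19 {ι : Type*} [Countable ι] (E : ι → ℝ) (a p c γ : ℝ)
    (hp : 0 ≤ p) (hc : 0 ≤ c) (hγ : 1 < γ)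
    (h : ∀ lam : ℝ,
      ENNReal.ofReal (c * (max (lam - a) 0) ^ (1 + p)) ≤
        ∑' j, ENNReal.ofReal (max (lam - E j) 0)) :
    ∀ lam : ℝ,
      ENNReal.ofReal (c * (Real.Gamma (p + 2) * Real.Gamma (γ + 1) /
          Real.Gamma (γ + p + 1)) * (max (lam - a) 0) ^ (γ + p)) ≤
        ∑' j, ENNReal.ofReal ((max (lam - E j) 0) ^ γ) := by
  intro lam
  have hγ1 : (0:ℝ) < γ - 1 := by linarith
  have hGγ1 : 0 < Real.Gamma (γ - 1) := Real.Gamma_pos_of_pos hγ1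
  have hGγ : 0 < Real.Gamma (γ + 1) := Real.Gamma_pos_of_pos (by linarith)
  have hGp : 0 < Real.Gamma (p + 2) := Real.Gamma_pos_of_pos (by linarith)
  have hGγp : 0 < Real.Gamma (γ + p + 1) := Real.Gamma_pos_of_pos (by linarith)
  set D := Real.Gamma (γ - 1) / Real.Gamma (γ + 1) with hD
  have hDpos : 0 < D := div_pos hGγ1 hGγ
  set S := ∑' j, ENNReal.ofReal ((max (lam - E j) 0) ^ γ) with hS
  -- value of the single-eigenvalue integral
  have hAj : ∀ j : ι, ∫⁻ t in Set.Ioi (0:ℝ),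
      ENNReal.ofReal (t ^ (γ-1-1) * max (lam - E j - t) 0) =
      ENNReal.ofReal (D * (max (lam - E j) 0) ^ γ) := by
    intro j
    have hk := keyLintegral (γ-1) 1 hγ1 one_pos (lam - E j)
    simp only [Real.rpow_one] at hk
    rw [hk, show γ - 1 + 1 + 1 = γ + 1 by ring, show γ - 1 + 1 = γ by ring,
      show (1:ℝ) + 1 = 2 by norm_num, Real.Gamma_two, mul_one, hD]
  -- measurability
  have hmeas : ∀ j : ι, AEMeasurable
      (fun t : ℝ => ENNReal.ofReal (t ^ (γ-1-1) * max (lam - E j - t) 0))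
      (volume.restrict (Set.Ioi (0:ℝ))) := by
    intro j
    exact Measurable.aemeasurable (by fun_prop)
  -- pointwise lower bound from the hypothesis
  have hpt : ∀ t ∈ Set.Ioi (0:ℝ),
      ENNReal.ofReal (t ^ (γ-1-1)) * ENNReal.ofReal (c * (max (lam - t - a) 0) ^ (1+p)) ≤
      ∑' j, ENNReal.ofReal (t ^ (γ-1-1) * max (lam - E j - t) 0) := by
    intro t ht
    have ht0 : (0:ℝ) ≤ t ^ (γ-1-1) := Real.rpow_nonneg (le_of_lt ht) _
    calc ENNReal.ofReal (t ^ (γ-1-1)) * ENNReal.ofReal (c * (max (lam - t - a) 0) ^ (1+p))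
        ≤ ENNReal.ofReal (t ^ (γ-1-1)) * ∑' j, ENNReal.ofReal (max (lam - t - E j) 0) :=
          mul_le_mul_right (h (lam - t)) _
      _ = ∑' j, ENNReal.ofReal (t ^ (γ-1-1) * max (lam - E j - t) 0) := by
          rw [← ENNReal.tsum_mul_left]
          refine tsum_congr fun j => ?_
          rw [← ENNReal.ofReal_mul ht0, sub_right_comm lam t (E j)]
  -- integrate the pointwise bound
  have hint : ∫⁻ t in Set.Ioi (0:ℝ),
      ENNReal.ofReal (t ^ (γ-1-1)) * ENNReal.ofReal (c * (max (lam - t - a) 0) ^ (1+p)) ≤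
      ENNReal.ofReal D * S := by
    calc ∫⁻ t in Set.Ioi (0:ℝ),
        ENNReal.ofReal (t ^ (γ-1-1)) * ENNReal.ofReal (c * (max (lam - t - a) 0) ^ (1+p))
        ≤ ∫⁻ t in Set.Ioi (0:ℝ),
            ∑' j, ENNReal.ofReal (t ^ (γ-1-1) * max (lam - E j - t) 0) :=
          setLIntegral_mono' measurableSet_Ioi hpt
      _ = ∑' j, ∫⁻ t in Set.Ioi (0:ℝ),
            ENNReal.ofReal (t ^ (γ-1-1) * max (lam - E j - t) 0) := lintegral_tsum hmeas
      _ = ∑' j, ENNReal.ofReal (D * (max (lam - E j) 0) ^ γ) := tsum_congr fun j => hAj j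
      _ = ENNReal.ofReal D * S := by
          rw [hS, ← ENNReal.tsum_mul_left]
          exact tsum_congr fun j => ENNReal.ofReal_mul hDpos.le
  -- compute the left-hand integral
  have hLHS : ∫⁻ t in Set.Ioi (0:ℝ),
      ENNReal.ofReal (t ^ (γ-1-1)) * ENNReal.ofReal (c * (max (lam - t - a) 0) ^ (1+p)) =
      ENNReal.ofReal c * ENNReal.ofReal (Real.Gamma (γ-1) * Real.Gamma (p+2) /
        Real.Gamma (γ+p+1) * (max (lam - a) 0) ^ (γ+p)) := by
    have hcong : ∀ t ∈ Set.Ioi (0:ℝ),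
        ENNReal.ofReal (t ^ (γ-1-1)) * ENNReal.ofReal (c * (max (lam - t - a) 0) ^ (1+p)) =
        ENNReal.ofReal c * ENNReal.ofReal (t ^ (γ-1-1) * (max (lam - a - t) 0) ^ (1+p)) := by
      intro t ht
      have ht0 : (0:ℝ) ≤ t ^ (γ-1-1) := Real.rpow_nonneg (le_of_lt ht) _
      rw [sub_right_comm lam t a, ENNReal.ofReal_mul hc, ENNReal.ofReal_mul ht0]
      ring
    rw [setLIntegral_congr_fun measurableSet_Ioi hcong,
      lintegral_const_mul' _ _ ENNReal.ofReal_ne_top,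
      keyLintegral (γ-1) (1+p) hγ1 (by linarith) (lam - a),
      show γ - 1 + (1+p) + 1 = γ + p + 1 by ring, show γ - 1 + (1+p) = γ + p by ring,
      show (1:ℝ) + p + 1 = p + 2 by ring]
  rw [hLHS] at hint
  -- cancel the factor `D`
  have hDne : ENNReal.ofReal D ≠ 0 := by
    simp [ENNReal.ofReal_eq_zero, not_le, hDpos]
  rw [← ENNReal.mul_le_mul_iff_right hDne ENNReal.ofReal_ne_top, ← ENNReal.ofReal_mul hDpos.le]
  calc ENNReal.ofReal (D * (c * (Real.Gamma (p + 2) * Real.Gamma (γ + 1) /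
          Real.Gamma (γ + p + 1)) * (max (lam - a) 0) ^ (γ + p)))
      = ENNReal.ofReal c * ENNReal.ofReal (Real.Gamma (γ-1) * Real.Gamma (p+2) /
          Real.Gamma (γ+p+1) * (max (lam - a) 0) ^ (γ+p)) := by
        rw [← ENNReal.ofReal_mul hc]
        congr 1
        rw [hD]
        field_simp
    _ ≤ ENNReal.ofReal D * S := hint
end
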